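/- In a Cauchon graph G_B^{m×n}, let i be a row vertex, j a column vertex, and P, Q two directed paths from i to j. If R is a directed path from a row vertex i' to a column vertex j' with i' > i, and R is vertex-disjoint from P or vertex-disjoint from Q, then R is vertex-disjoint from U(P,Q). -/

import Mathlib

noncomputable section

namespace QM

/-- 1-indexed rank of a coordinate of `[m] × [n]` in the lexicographic order. -/
def idx {m n : ℕ} (p : Fin m × Fin n) : ℕ := p.1.1 * n + p.2.1 + 1

/-- `q` is not a root of unity. -/
def NotRootOfUnity {K : Type*} [Field K] (q : K) : Prop := ∀ k : ℕ, 0 < k → q ^ k ≠ 1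

/-- `B` is (the set of black squares of) a Cauchon diagram. -/
def IsCauchon {m n : ℕ} (B : Set (Fin m × Fin n)) : Prop :=
  ∀ p ∈ B, (∀ j' : Fin n, j' < p.2 → (p.1, j') ∈ B) ∨ (∀ i' : Fin m, i' < p.1 → (i', p.2) ∈ B)

/-! ### The quantum torus, presented by generators and relations -/

/-- Generators of the quantum torus: a generator `t_{i,j}` and its inverse for each coordinate. -/
inductive TGen (m n : ℕ) : Type
  | pos : Fin m → Fin n → TGen m n
  | neg : Fin m → Fin n → TGen m n

variable (K : Type*) [Field K]

def Tp (m n : ℕ) (i : Fin m) (j : Fin n) : FreeAlgebra K (TGen m n) :=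
  FreeAlgebra.ι K (TGen.pos i j)

def Tm (m n : ℕ) (i : Fin m) (j : Fin n) : FreeAlgebra K (TGen m n) :=
  FreeAlgebra.ι K (TGen.neg i j)

/-- The defining relations of the `m × n` quantum torus. -/
inductive TorusRel (m n : ℕ) (q : K) :
    FreeAlgebra K (TGen m n) → FreeAlgebra K (TGen m n) → Prop
  | mulInv : ∀ (i : Fin m) (j : Fin n), TorusRel m n q (Tp K m n i j * Tm K m n i j) 1
  | invMul : ∀ (i : Fin m) (j : Fin n), TorusRel m n q (Tm K m n i j * Tp K m n i j) 1
  | rowRel : ∀ {i : Fin m} {j l : Fin n}, j < l →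
      TorusRel m n q (Tp K m n i j * Tp K m n i l) (q • (Tp K m n i l * Tp K m n i j))
  | colRel : ∀ {i k : Fin m} {j : Fin n}, i < k →
      TorusRel m n q (Tp K m n i j * Tp K m n k j) (q • (Tp K m n k j * Tp K m n i j))
  | commRel : ∀ {i k : Fin m} {j l : Fin n}, i ≠ k → j ≠ l →
      TorusRel m n q (Tp K m n i j * Tp K m n k l) (Tp K m n k l * Tp K m n i j)

/-- The `m × n` quantum torus `O_q((K^*)^{m×n})`. -/
abbrev QTorus (m n : ℕ) (q : K) := RingQuot (TorusRel K m n q)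

/-- The generator `t_{i,j}` of the quantum torus. -/
def tq (m n : ℕ) (q : K) (i : Fin m) (j : Fin n) : QTorus K m n q :=
  RingQuot.mkAlgHom K (TorusRel K m n q) (Tp K m n i j)

/-- The inverse generator `t_{i,j}⁻¹` of the quantum torus. -/
def tqi (m n : ℕ) (q : K) (i : Fin m) (j : Fin n) : QTorus K m n q :=
  RingQuot.mkAlgHom K (TorusRel K m n q) (Tm K m n i j)

/-- The list of all coordinates of `[m] × [n]` in increasing lexicographic order. -/
def coordList (m n : ℕ) : List (Fin m × Fin n) :=
  (List.finRange m).flatMap fun i => (List.finRange n).map fun j => (i, j)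

/-- `t_{i,j}^z` for an integer `z`. -/
def tzpow (m n : ℕ) (q : K) (i : Fin m) (j : Fin n) (z : ℤ) : QTorus K m n q :=
  if 0 ≤ z then tq K m n q i j ^ z.toNat else tqi K m n q i j ^ (-z).toNat

/-- The lexicographic term `t^N` of the quantum torus, `N` an integer matrix. -/
def tpow (m n : ℕ) (q : K) (N : Matrix (Fin m) (Fin n) ℤ) : QTorus K m n q :=
  ((coordList m n).map fun p => tzpow K m n q p.1 p.2 (N p.1 p.2)).prod

/-! ### Cauchon graphs and paths -/

/-- Vertices of a Cauchon graph: white vertices, row vertices and column vertices. -/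
inductive V (m n : ℕ) : Type
  | white : Fin m → Fin n → V m n
  | row : Fin m → V m n
  | col : Fin n → V m n
deriving DecidableEq

/-- Directed edges of the Cauchon graph `G_B^{m×n}`. -/
inductive Edge {m n : ℕ} (B : Set (Fin m × Fin n)) : V m n → V m n → Prop
  | horiz : ∀ {i : Fin m} {j j' : Fin n}, j' < j → (i, j) ∉ B → (i, j') ∉ B →
      (∀ j'' : Fin n, j' < j'' → j'' < j → (i, j'') ∈ B) →
      Edge B (V.white i j) (V.white i j')
  | vert : ∀ {i i' : Fin m} {j : Fin n}, i < i' → (i, j) ∉ B → (i', j) ∉ B →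
      (∀ i'' : Fin m, i < i'' → i'' < i' → (i'', j) ∈ B) →
      Edge B (V.white i j) (V.white i' j)
  | fromRow : ∀ {i : Fin m} {j : Fin n}, (i, j) ∉ B →
      (∀ j' : Fin n, j < j' → (i, j') ∈ B) → Edge B (V.row i) (V.white i j)
  | toCol : ∀ {i : Fin m} {j : Fin n}, (i, j) ∉ B →
      (∀ i' : Fin m, i < i' → (i', j) ∈ B) → Edge B (V.white i j) (V.col j)

/-- The weight of an edge of a Cauchon graph, as an element of the quantum torus. -/
def ew (m n : ℕ) (q : K) : V m n → V m n → QTorus K m n q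
  | V.white i j, V.white i' j' => if i = i' then tqi K m n q i j * tq K m n q i j' else 1
  | V.row _, V.white i j => tq K m n q i j
  | _, _ => 1

/-- The weight of a list of vertices: ordered product of the weights of consecutive edges. -/
def wtList (m n : ℕ) (q : K) : List (V m n) → QTorus K m n q
  | [] => 1
  | [_] => 1
  | a :: b :: rest => ew K m n q a b * wtList m n q (b :: rest)

/-- A (directed, vertex-disjoint) path in the Cauchon graph `G_B^{m×n}`. -/
structure CPath (m n : ℕ) (B : Set (Fin m × Fin n)) : Type where
  verts : List (V m n)
  nonempty : verts ≠ []
  chain : verts.Chain' (Edge B)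
  nodup : verts.Nodup

/-- The starting vertex of a path. -/
def CPath.first {m n : ℕ} {B : Set (Fin m × Fin n)} (P : CPath m n B) : V m n :=
  P.verts.head P.nonempty

/-- The ending vertex of a path. -/
def CPath.last {m n : ℕ} {B : Set (Fin m × Fin n)} (P : CPath m n B) : V m n :=
  P.verts.getLast P.nonempty

/-- The weight `w(P)` of a path. -/
def CPath.wt {m n : ℕ} (q : K) {B : Set (Fin m × Fin n)} (P : CPath m n B) : QTorus K m n q :=
  wtList K m n q P.verts

/-- Whether an (oriented) edge between these two vertices is vertical. -/
def isVertV {m n : ℕ} : V m n → V m n → Bool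
  | V.white _ j, V.white _ j' => j == j'
  | V.white _ _, V.col _ => true
  | _, _ => false

/-- Whether an (oriented) edge between these two vertices is horizontal. -/
def isHorizV {m n : ℕ} : V m n → V m n → Bool
  | V.white i _, V.white i' _ => i == i'
  | V.row _, V.white _ _ => true
  | _, _ => false

/-- The vertex list `L` has a `⌐`-turn (Le-turn) at the white vertex `(a,b)`:
it enters `(a,b)` by a vertical edge and leaves it by a horizontal edge. -/
def HasLeTurnAt {m n : ℕ} (L : List (V m n)) (a : Fin m) (b : Fin n) : Prop :=
  ∃ u w : V m n, List.IsInfix [u, V.white a b, w] L ∧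
    isVertV u (V.white a b) = true ∧ isHorizV (V.white a b) w = true

/-- `Γ_B^{(t)}(i,j)`: the paths from row vertex `i` to column vertex `j` with no `⌐`-turn at a
white vertex larger than the `t`-th smallest coordinate. -/
def Gamma {m n : ℕ} (B : Set (Fin m × Fin n)) (t : ℕ) (i : Fin m) (j : Fin n) :
    Set (CPath m n B) :=
  {P | P.first = V.row i ∧ P.last = V.col j ∧
    ∀ (a : Fin m) (b : Fin n), t < idx (a, b) → ¬ HasLeTurnAt P.verts a b}

/-- The generator `x_{i,j}` of `A_B^{(t)}`: the sum of the weights of all paths in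
`Γ_B^{(t)}(i,j)`. -/
def XB (m n : ℕ) (q : K) (B : Set (Fin m × Fin n)) (t : ℕ) (i : Fin m) (j : Fin n) :
    QTorus K m n q :=
  ∑ᶠ P ∈ Gamma B t i j, CPath.wt K q P

/-- The subalgebra `A_B^{(t)}` of the quantum torus. -/
def ABalg (m n : ℕ) (q : K) (B : Set (Fin m × Fin n)) (t : ℕ) : Subalgebra K (QTorus K m n q) :=
  Algebra.adjoin K (Set.range fun p : Fin m × Fin n => XB K m n q B t p.1 p.2)

/-- The localization `A_B^{(t)}[x_{r,s}^{-1}]`, realized inside the quantum torus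
(note `x_{r,s} = t_{r,s}`). -/
def ABlocAlg (m n : ℕ) (q : K) (B : Set (Fin m × Fin n)) (t : ℕ) (r : Fin m) (s : Fin n) :
    Subalgebra K (QTorus K m n q) :=
  Algebra.adjoin K
    (Set.range (fun p : Fin m × Fin n => XB K m n q B t p.1 p.2) ∪ {tqi K m n q r s})

/-- A family of paths is pairwise vertex-disjoint. -/
def SysDisjoint {m n : ℕ} {B : Set (Fin m × Fin n)} {k : ℕ} (P : Fin k → CPath m n B) : Prop :=
  ∀ a b : Fin k, a ≠ b → ∀ v ∈ (P a).verts, v ∉ (P b).verts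

/-- `Γ_B^{(t)}(I|J)`: vertex-disjoint path systems from the row vertices `I` to the column
vertices `J`. -/
def GammaSys {m n : ℕ} (B : Set (Fin m × Fin n)) (t k : ℕ) (I : Fin k → Fin m)
    (J : Fin k → Fin n) : Set (Fin k → CPath m n B) :=
  {P | (∀ a, P a ∈ Gamma B t (I a) (J a)) ∧ SysDisjoint P}

/-- The weight of a path system: the ordered product of the weights of its paths. -/
def sysWt {m n : ℕ} (q : K) {B : Set (Fin m × Fin n)} {k : ℕ} (P : Fin k → CPath m n B) :
    QTorus K m n q :=
  ((List.finRange k).map fun a => CPath.wt K q (P a)).prod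

/-- The number of inversions of a permutation of `Fin k`. -/
def inversions {k : ℕ} (σ : Equiv.Perm (Fin k)) : ℕ :=
  (Finset.univ.filter fun p : Fin k × Fin k => p.1 < p.2 ∧ σ p.2 < σ p.1).card

/-- The quantum minor `[I|J]_B^{(t)}` of `A_B^{(t)}`, as an element of the quantum torus. -/
def qminor (m n : ℕ) (q : K) (B : Set (Fin m × Fin n)) (t : ℕ) (k : ℕ)
    (I : Fin k → Fin m) (J : Fin k → Fin n) : QTorus K m n q :=
  ∑ σ : Equiv.Perm (Fin k),
    ((-q) ^ inversions σ) • ((List.finRange k).map fun a => XB K m n q B t (I a) (J (σ a))).prod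

/-! ### The algebras `R^{(t)}`, presented by generators and relations -/

def xf (m n : ℕ) (p : Fin m × Fin n) : FreeAlgebra K (Fin m × Fin n) := FreeAlgebra.ι K p

/-- The defining relations of the algebra `R^{(t)}`. -/
inductive RRel (m n : ℕ) (q : K) (t : ℕ) :
    FreeAlgebra K (Fin m × Fin n) → FreeAlgebra K (Fin m × Fin n) → Prop
  | rowRel : ∀ {i : Fin m} {j l : Fin n}, j < l →
      RRel m n q t (xf K m n (i, j) * xf K m n (i, l)) (q • (xf K m n (i, l) * xf K m n (i, j)))
  | colRel : ∀ {i k : Fin m} {j : Fin n}, i < k →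
      RRel m n q t (xf K m n (i, j) * xf K m n (k, j)) (q • (xf K m n (k, j) * xf K m n (i, j)))
  | antiDiag : ∀ {i k : Fin m} {j l : Fin n}, i < k → j < l →
      RRel m n q t (xf K m n (i, l) * xf K m n (k, j)) (xf K m n (k, j) * xf K m n (i, l))
  | diagComm : ∀ {i k : Fin m} {j l : Fin n}, i < k → j < l → t < idx (k, l) →
      RRel m n q t (xf K m n (i, j) * xf K m n (k, l)) (xf K m n (k, l) * xf K m n (i, j))
  | diagQ : ∀ {i k : Fin m} {j l : Fin n}, i < k → j < l → idx (k, l) ≤ t →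
      RRel m n q t (xf K m n (i, j) * xf K m n (k, l))
        (xf K m n (k, l) * xf K m n (i, j) + (q - q⁻¹) • (xf K m n (i, l) * xf K m n (k, j)))

/-- The algebra `R^{(t)}` (`R^{(1)}` is quantum affine space, `R^{(mn)}` is quantum matrices). -/
abbrev Rt (m n : ℕ) (q : K) (t : ℕ) := RingQuot (RRel K m n q t)

/-- The standard generator `x_{i,j}` of `R^{(t)}`. -/
def rx (m n : ℕ) (q : K) (t : ℕ) (i : Fin m) (j : Fin n) : Rt K m n q t :=
  RingQuot.mkAlgHom K (RRel K m n q t) (xf K m n (i, j))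

/-- The lexicographic term `x^M` of `R^{(t)}`. -/
def rxpow (m n : ℕ) (q : K) (t : ℕ) (M : Matrix (Fin m) (Fin n) ℕ) : Rt K m n q t :=
  ((coordList m n).map fun p => rx K m n q t p.1 p.2 ^ M p.1 p.2).prod

/-- The quantum minor `[I|J]^{(t)}` of `R^{(t)} ≅ A^{(t)}`. -/
def rminor (m n : ℕ) (q : K) (t : ℕ) (k : ℕ) (I : Fin k → Fin m) (J : Fin k → Fin n) :
    Rt K m n q t :=
  ∑ σ : Equiv.Perm (Fin k),
    ((-q) ^ inversions σ) • ((List.finRange k).map fun a => rx K m n q t (I a) (J (σ a))).prod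

/-- The diagonal subminor of the minor indexed by `(I, J)` determined by a subset `s` of the
index set. -/
def minorOfFinset (m n : ℕ) (q : K) (t : ℕ) {k : ℕ} (I : Fin k → Fin m) (J : Fin k → Fin n)
    (s : Finset (Fin k)) : Rt K m n q t :=
  rminor K m n q t s.card (fun a => ((s.orderIsoOfFin rfl a : s) : Fin k) |> I)
    (fun a => ((s.orderIsoOfFin rfl a : s) : Fin k) |> J)

/-! ### The matrix lexicographic order, lexicographic expressions, leading terms -/

/-- `M ≺ N` at the coordinate `p` (matrix lexicographic order): the entries agree at all
coordinates before `p` and `M p < N p`. -/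
def MLexLtAt {m n : ℕ} {R : Type*} [LT R] (M N : Matrix (Fin m) (Fin n) R)
    (p : Fin m × Fin n) : Prop :=
  M p.1 p.2 < N p.1 p.2 ∧ ∀ p' : Fin m × Fin n, idx p' < idx p → M p'.1 p'.2 = N p'.1 p'.2

/-- The matrix lexicographic order `M ≺ N`. -/
def MLexLt {m n : ℕ} {R : Type*} [LT R] (M N : Matrix (Fin m) (Fin n) R) : Prop :=
  ∃ p : Fin m × Fin n, MLexLtAt M N p

/-- `c` is the (unique) lexicographic expression of `a ∈ R^{(t)}`. -/
def IsLexRep (m n : ℕ) (q : K) (t : ℕ) (a : Rt K m n q t)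
    (c : Matrix (Fin m) (Fin n) ℕ →₀ K) : Prop :=
  a = c.sum fun N r => r • rxpow K m n q t N

/-- `x^M` is the leading term of `a ∈ R^{(t)}` with respect to the matrix lexicographic order. -/
def IsLeadMat (m n : ℕ) (q : K) (t : ℕ) (a : Rt K m n q t)
    (M : Matrix (Fin m) (Fin n) ℕ) : Prop :=
  ∃ c, IsLexRep K m n q t a c ∧ M ∈ c.support ∧ ∀ L ∈ c.support, L ≠ M → MLexLt L M

/-- The permutation matrix `P_σ` associated to index sets `(I, J)` and a permutation `σ`. -/
def permMat {m n k : ℕ} (I : Fin k → Fin m) (J : Fin k → Fin n) (σ : Equiv.Perm (Fin k)) :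
    Matrix (Fin m) (Fin n) ℕ :=
  fun i j => (Finset.univ.filter fun a : Fin k => I a = i ∧ J (σ a) = j).card

/-- The elementary matrix `E_{i,j}`. -/
def Emat {m n : ℕ} (i : Fin m) (j : Fin n) : Matrix (Fin m) (Fin n) ℕ :=
  fun i' j' => if i' = i ∧ j' = j then 1 else 0

/-- The lexicographic term `x^N` formed from the generators of `A_B^{(t)}` in the
quantum torus. -/
def xTermQ (m n : ℕ) (q : K) (B : Set (Fin m × Fin n)) (t : ℕ)
    (N : Matrix (Fin m) (Fin n) ℕ) : QTorus K m n q :=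
  ((coordList m n).map fun p => XB K m n q B t p.1 p.2 ^ N p.1 p.2).prod

/-- `c` is the lexicographic expression of `a` in terms of the generators of `A_B^{(t)}`. -/
def IsXRep (m n : ℕ) (q : K) (B : Set (Fin m × Fin n)) (t : ℕ) (a : QTorus K m n q)
    (c : Matrix (Fin m) (Fin n) ℕ →₀ K) : Prop :=
  a = c.sum fun N r => r • xTermQ K m n q B t N

/-- The lexicographic term `y^N` of the localization `A_B^{(t')}[y_{r,s}^{-1}]`, where the
`(r,s)` entry of `N` may be negative. -/
def LocTerm (m n : ℕ) (q : K) (B : Set (Fin m × Fin n)) (t' : ℕ) (r : Fin m) (s : Fin n)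
    (N : Matrix (Fin m) (Fin n) ℤ) : QTorus K m n q :=
  ((coordList m n).map fun p =>
    if p = (r, s) then
      (if 0 ≤ N r s then XB K m n q B t' r s ^ (N r s).toNat
        else tqi K m n q r s ^ (-(N r s)).toNat)
    else XB K m n q B t' p.1 p.2 ^ (N p.1 p.2).toNat).prod

/-- `c` is the lexicographic expression of `a` in the localization `A_B^{(t')}[y_{r,s}^{-1}]`. -/
def IsLocRep (m n : ℕ) (q : K) (B : Set (Fin m × Fin n)) (t' : ℕ) (r : Fin m) (s : Fin n)
    (a : QTorus K m n q) (c : Matrix (Fin m) (Fin n) ℤ →₀ K) : Prop :=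
  (∀ N ∈ c.support, ∀ p : Fin m × Fin n, p ≠ (r, s) → 0 ≤ N p.1 p.2) ∧
  a = c.sum fun N α => α • LocTerm K m n q B t' r s N

/-! ### The path `U(P,Q)` -/

/-- Auxiliary function computing the vertex list of `U(P,Q)`: between consecutive common
vertices of `P` and `Q`, follow whichever subpath is above the other. -/
def upperAux {m n : ℕ} : ℕ → List (V m n) → List (V m n) → List (V m n)
  | 0, _, _ => []
  | _ + 1, [], _ => []
  | _ + 1, _, [] => []
  | fuel + 1, p :: ps, q :: qs =>
    match ps.filter (fun v => qs.contains v) with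
    | [] => [p]
    | v :: _ =>
      (if isHorizV p (ps.headD p) then p :: ps.takeWhile (fun x => x != v)
        else q :: qs.takeWhile (fun x => x != v)) ++
        upperAux fuel (ps.dropWhile fun x => x != v) (qs.dropWhile fun x => x != v)

/-- The vertex list of the path `U(P,Q)`. -/
def upperList {m n : ℕ} {B : Set (Fin m × Fin n)} (P Q : CPath m n B) : List (V m n) :=
  upperAux (P.verts.length + Q.verts.length) P.verts Q.verts


namespace S10


open List

variable {m n : ℕ} {B : Set (Fin m × Fin n)}

/-- Generic consecutive-pair predicate. -/
def Cons {α : Type*} (l : List α) (x y : α) : Prop := ∃ l1 l2, l = l1 ++ x :: y :: l2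

theorem Cons.mem_left {α : Type*} {l : List α} {x y : α} (h : Cons l x y) : x ∈ l := by
  obtain ⟨l1, l2, rfl⟩ := h; simp

theorem Cons.mem_right {α : Type*} {l : List α} {x y : α} (h : Cons l x y) : y ∈ l := by
  obtain ⟨l1, l2, rfl⟩ := h; simp

theorem Cons.append_left {α : Type*} {l : List α} {x y : α} (h : Cons l x y) (t : List α) :
    Cons (t ++ l) x y := by
  obtain ⟨l1, l2, rfl⟩ := h; exact ⟨t ++ l1, l2, by simp⟩

theorem Cons.append_right {α : Type*} {l : List α} {x y : α} (h : Cons l x y) (s : List α) :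
    Cons (l ++ s) x y := by
  obtain ⟨l1, l2, rfl⟩ := h; exact ⟨l1, l2 ++ s, by simp⟩

theorem Cons.cons {α : Type*} {l : List α} {x y : α} (h : Cons l x y) (a : α) :
    Cons (a :: l) x y := by
  obtain ⟨l1, l2, rfl⟩ := h; exact ⟨a :: l1, l2, rfl⟩

theorem cons_cons_iff {α : Type*} {a x y : α} {l : List α} :
    Cons (a :: l) x y ↔ (a = x ∧ l.head? = some y) ∨ Cons l x y := by
  constructor
  · rintro ⟨l1, l2, h⟩
    cases l1 with
    | nil =>
      simp only [List.nil_append, List.cons.injEq] at h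
      exact Or.inl ⟨h.1, by rw [h.2]; rfl⟩
    | cons b l1' =>
      simp only [List.cons_append, List.cons.injEq] at h
      exact Or.inr ⟨l1', l2, h.2⟩
  · rintro (⟨rfl, h⟩ | h)
    · cases l with
      | nil => simp at h
      | cons b l' =>
        simp only [List.head?_cons, Option.some.injEq] at h
        subst h; exact ⟨[], l', rfl⟩
    · exact h.cons a

theorem cons_append_cases {α : Type*} {A C : List α} {x y : α} (h : Cons (A ++ C) x y) :
    Cons A x y ∨ Cons C x y ∨ (A.getLast? = some x ∧ C.head? = some y) := by
  induction A with
  | nil => exact Or.inr (Or.inl h)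
  | cons a A' ih =>
    rw [List.cons_append] at h
    rcases cons_cons_iff.mp h with ⟨rfl, hh⟩ | h'
    · cases A' with
      | nil =>
        right; right
        constructor
        · rfl
        · simpa using hh
      | cons b A'' =>
        left
        simp only [List.cons_append, List.head?_cons, Option.some.injEq] at hh
        subst hh
        exact ⟨[], A'', rfl⟩
    · rcases ih h' with h1 | h2 | h3
      · exact Or.inl (h1.cons a)
      · exact Or.inr (Or.inl h2)
      · right; right
        refine ⟨?_, h3.2⟩
        cases A' with
        | nil => simp at h3
        | cons b A'' => rw [List.getLast?_cons_cons]; exact h3.1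

theorem cons_of_getLast {α : Type*} {A : List α} {u : α} (h : A.getLast? = some u) (v : α)
    (D : List α) : Cons (A ++ v :: D) u v := by
  induction A with
  | nil => simp at h
  | cons a A' ih =>
    cases A' with
    | nil =>
      simp only [List.getLast?_singleton, Option.some.injEq] at h
      subst h; exact ⟨[], D, rfl⟩
    | cons b A'' =>
      rw [List.getLast?_cons_cons] at h
      exact (ih h).cons a

theorem cons_nodup_right_unique {α : Type*} {l : List α} (hn : l.Nodup) {x y y' : α}
    (h1 : Cons l x y) (h2 : Cons l x y') : y = y' := by
  induction l with
  | nil => obtain ⟨l1, l2, h⟩ := h1; simp at h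
  | cons a l ih =>
    rcases cons_cons_iff.mp h1 with ⟨rfl, hy⟩ | h1'
    · rcases cons_cons_iff.mp h2 with ⟨-, hy'⟩ | h2'
      · rw [hy] at hy'; exact (Option.some_inj.mp hy')
      · exact absurd h2'.mem_left (List.nodup_cons.mp hn).1
    · rcases cons_cons_iff.mp h2 with ⟨rfl, hy'⟩ | h2'
      · exact absurd h1'.mem_left (List.nodup_cons.mp hn).1
      · exact ih (List.nodup_cons.mp hn).2 h1' h2'

theorem chain'_rel_of_cons {α : Type*} {R : α → α → Prop} {l : List α} (hc : l.Chain' R)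
    {x y : α} (h : Cons l x y) : R x y := by
  obtain ⟨l1, l2, rfl⟩ := h
  replace hc := List.isChain_append.mp hc
  exact (List.isChain_cons_cons.mp hc.2.1).1

theorem rel_of_chain'_mem {α : Type*} {R : α → α → Prop}
    (ht : ∀ a b c, R a b → R b c → R a c) :
    ∀ {l : List α} {a : α}, (a :: l).Chain' R → ∀ b ∈ l, R a b := by
  intro l
  induction l with
  | nil => intro a _ b hb; simp at hb
  | cons c l' ih =>
    intro a hc b hb
    have h1 : R a c := (List.isChain_cons_cons.mp hc).1
    rcases List.mem_cons.mp hb with rfl | hb'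
    · exact h1
    · exact ht _ _ _ h1 (ih (List.isChain_cons_cons.mp hc).2 b hb')

theorem pairwise_of_chain' {α : Type*} {R : α → α → Prop}
    (ht : ∀ a b c, R a b → R b c → R a c) :
    ∀ {l : List α}, l.Chain' R → l.Pairwise R := by
  intro l
  induction l with
  | nil => simp
  | cons a l' ih =>
    intro h
    rw [List.pairwise_cons]
    exact ⟨rel_of_chain'_mem ht h, ih h.tail⟩

theorem mem_pair_of_mem {α : Type*} {l : List α} (hl : 2 ≤ l.length) {v : α} (hv : v ∈ l) :
    ∃ x y, Cons l x y ∧ (v = x ∨ v = y) := by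
  induction l with
  | nil => simp at hv
  | cons a t ih =>
    cases t with
    | nil => simp at hl
    | cons b t' =>
      rcases List.mem_cons.mp hv with rfl | hv'
      · exact ⟨v, b, ⟨[], t', rfl⟩, Or.inl rfl⟩
      · cases t' with
        | nil =>
          have hvb : v = b := by simpa using hv'
          exact ⟨a, b, ⟨[], [], rfl⟩, Or.inr hvb⟩
        | cons c t'' =>
          obtain ⟨x, y, hc, hm⟩ := ih (by simp) hv'
          exact ⟨x, y, hc.cons a, hm⟩

/-! ### Positions and edge geometry -/

/-- Planar position of a vertex: (row, column), row `m` = bottom, column `n` = right. -/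
def pos : V m n → ℕ × ℕ
  | V.white a b => (a.1, b.1)
  | V.row a => (a.1, n)
  | V.col b => (m, b.1)

theorem pos_inj {u v : V m n} (h : pos u = pos v) : u = v := by
  cases u with
  | white a b =>
    cases v with
    | white a' b' =>
      simp only [pos, Prod.mk.injEq] at h
      rw [show a = a' from Fin.ext h.1, show b = b' from Fin.ext h.2]
    | row a' => simp only [pos, Prod.mk.injEq] at h; exact absurd h.2 (Nat.ne_of_lt b.2)
    | col b' => simp only [pos, Prod.mk.injEq] at h; exact absurd h.1 (Nat.ne_of_lt a.2)
  | row a =>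
    cases v with
    | white a' b' => simp only [pos, Prod.mk.injEq] at h; exact absurd h.2.symm (Nat.ne_of_lt b'.2)
    | row a' => simp only [pos, Prod.mk.injEq] at h; rw [show a = a' from Fin.ext h.1]
    | col b' =>
      simp only [pos, Prod.mk.injEq] at h; exact absurd h.1 (Nat.ne_of_lt a.2)
  | col b =>
    cases v with
    | white a' b' => simp only [pos, Prod.mk.injEq] at h; exact absurd h.1.symm (Nat.ne_of_lt a'.2)
    | row a' => simp only [pos, Prod.mk.injEq] at h; exact absurd h.1.symm (Nat.ne_of_lt a'.2)
    | col b' => simp only [pos, Prod.mk.injEq] at h; rw [show b = b' from Fin.ext h.2]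

theorem pos_fst_le (v : V m n) : (pos v).1 ≤ m := by
  cases v <;> simp [pos] <;> omega

theorem pos_snd_le (v : V m n) : (pos v).2 ≤ n := by
  cases v with
  | white a b => exact Nat.le_of_lt b.2
  | row a => exact le_rfl
  | col b => exact Nat.le_of_lt b.2

/-- The (oriented) segment between two vertices is geometrically horizontal. -/
def Horiz (u v : V m n) : Prop := (pos u).1 = (pos v).1 ∧ (pos v).2 < (pos u).2

/-- The (oriented) segment between two vertices is geometrically vertical. -/
def Vert (u v : V m n) : Prop := (pos u).2 = (pos v).2 ∧ (pos u).1 < (pos v).1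

/-- Geometric data of a horizontal edge at row `r`, from column `c1` (right) to `c2` (left). -/
structure HE (B : Set (Fin m × Fin n)) (r c1 c2 : ℕ) : Prop where
  hrm : r < m
  hlt : c2 < c1
  hc1 : c1 ≤ n
  hc2 : c2 < n
  white2 : ∀ (hr : r < m) (hc : c2 < n), ((⟨r, hr⟩ : Fin m), (⟨c2, hc⟩ : Fin n)) ∉ B
  white1 : ∀ (hr : r < m) (hc : c1 < n), ((⟨r, hr⟩ : Fin m), (⟨c1, hc⟩ : Fin n)) ∉ B
  black : ∀ c, c2 < c → c < c1 → ∀ (hr : r < m) (hc : c < n),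
    ((⟨r, hr⟩ : Fin m), (⟨c, hc⟩ : Fin n)) ∈ B

/-- Geometric data of a vertical edge at column `c`, from row `r1` (top) to `r2` (bottom). -/
structure VE (B : Set (Fin m × Fin n)) (r1 r2 c : ℕ) : Prop where
  hcn : c < n
  hlt : r1 < r2
  hr2 : r2 ≤ m
  hr1 : r1 < m
  white1 : ∀ (hr : r1 < m) (hc : c < n), ((⟨r1, hr⟩ : Fin m), (⟨c, hc⟩ : Fin n)) ∉ B
  white2 : ∀ (hr : r2 < m) (hc : c < n), ((⟨r2, hr⟩ : Fin m), (⟨c, hc⟩ : Fin n)) ∉ B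
  black : ∀ r, r1 < r → r < r2 → ∀ (hr : r < m) (hc : c < n),
    ((⟨r, hr⟩ : Fin m), (⟨c, hc⟩ : Fin n)) ∈ B

/-- Every edge of a Cauchon graph is geometrically a horizontal or vertical segment. -/
inductive EG (B : Set (Fin m × Fin n)) : V m n → V m n → Prop
  | hor {u v : V m n} {r c1 c2 : ℕ} : HE B r c1 c2 → pos u = (r, c1) → pos v = (r, c2) →
      EG B u v
  | ver {u v : V m n} {r1 r2 c : ℕ} : VE B r1 r2 c → pos u = (r1, c) → pos v = (r2, c) →
      EG B u v

theorem fin_eta {k : ℕ} (a : Fin k) (h : a.1 < k) : (⟨a.1, h⟩ : Fin k) = a := rfl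

theorem edge_eg {u v : V m n} (e : Edge B u v) : EG B u v := by
  cases e with
  | @horiz i j j' hlt hb1 hb2 hbet =>
    refine EG.hor (r := i.1) (c1 := j.1) (c2 := j'.1) ?_ rfl rfl
    refine ⟨i.2, hlt, Nat.le_of_lt j.2, j'.2, ?_, ?_, ?_⟩
    · intro hr hc; simpa [fin_eta] using hb2
    · intro hr hc; simpa [fin_eta] using hb1
    · intro c h1 h2 hr hc
      simpa [fin_eta] using hbet ⟨c, hc⟩ h1 h2
  | @vert i i' j hlt hb1 hb2 hbet =>
    refine EG.ver (r1 := i.1) (r2 := i'.1) (c := j.1) ?_ rfl rfl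
    refine ⟨j.2, hlt, Nat.le_of_lt i'.2, i.2, ?_, ?_, ?_⟩
    · intro hr hc; simpa [fin_eta] using hb1
    · intro hr hc; simpa [fin_eta] using hb2
    · intro r h1 h2 hr hc
      simpa [fin_eta] using hbet ⟨r, hr⟩ h1 h2
  | @fromRow i j hb hbl =>
    refine EG.hor (r := i.1) (c1 := n) (c2 := j.1) ?_ rfl rfl
    refine ⟨i.2, j.2, le_rfl, j.2, ?_, ?_, ?_⟩
    · intro hr hc; simpa [fin_eta] using hb
    · intro hr hc; omega
    · intro c h1 h2 hr hc
      simpa [fin_eta] using hbl ⟨c, hc⟩ h1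
  | @toCol i j hb hbl =>
    refine EG.ver (r1 := i.1) (r2 := m) (c := j.1) ?_ rfl rfl
    refine ⟨j.2, i.2, le_rfl, i.2, ?_, ?_, ?_⟩
    · intro hr hc; simpa [fin_eta] using hb
    · intro hr hc; omega
    · intro r h1 h2 hr hc
      simpa [fin_eta] using hbl ⟨r, hr⟩ h1

theorem eg_dir {u v : V m n} (e : EG B u v) : Horiz u v ∨ Vert u v := by
  cases e with
  | hor H pu pv => left; constructor <;> rw [pu, pv] <;> simpa using H.hlt
  | ver H pu pv => right; constructor <;> rw [pu, pv] <;> simpa using H.hlt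

theorem not_horiz_and_vert {u v : V m n} (h : Horiz u v) (h' : Vert u v) : False := by
  obtain ⟨h1, h2⟩ := h; obtain ⟨h3, h4⟩ := h'; omega

/-- The set of lattice points covered by the closed segment from `u` to `v`. -/
def cov (u v : V m n) (z : ℕ × ℕ) : Prop :=
  (z.1 = (pos u).1 ∧ z.1 = (pos v).1 ∧ (pos v).2 ≤ z.2 ∧ z.2 ≤ (pos u).2) ∨
  (z.2 = (pos u).2 ∧ z.2 = (pos v).2 ∧ (pos u).1 ≤ z.1 ∧ z.1 ≤ (pos v).1)

theorem cov_hor {u v : V m n} {r c1 c2 : ℕ} (H : HE B r c1 c2) (pu : pos u = (r, c1))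
    (pv : pos v = (r, c2)) {z : ℕ × ℕ} :
    cov u v z ↔ (z.1 = r ∧ c2 ≤ z.2 ∧ z.2 ≤ c1) := by
  have := H.hlt
  constructor
  · rintro (⟨h1, h2, h3, h4⟩ | ⟨h1, h2, h3, h4⟩) <;> rw [pu, pv] at * <;> simp_all <;> omega
  · rintro ⟨h1, h2, h3⟩; left; rw [pu, pv]; exact ⟨h1, h1, h2, h3⟩

theorem cov_ver {u v : V m n} {r1 r2 c : ℕ} (H : VE B r1 r2 c) (pu : pos u = (r1, c))
    (pv : pos v = (r2, c)) {z : ℕ × ℕ} :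
    cov u v z ↔ (z.2 = c ∧ r1 ≤ z.1 ∧ z.1 ≤ r2) := by
  have := H.hlt
  constructor
  · rintro (⟨h1, h2, h3, h4⟩ | ⟨h1, h2, h3, h4⟩) <;> rw [pu, pv] at * <;> simp_all <;> omega
  · rintro ⟨h1, h2, h3⟩; right; rw [pu, pv]; exact ⟨h1, h1, h2, h3⟩

theorem cov_bounds {u v : V m n} (e : EG B u v) {z : ℕ × ℕ} (hz : cov u v z) :
    (pos u).1 ≤ z.1 ∧ z.1 ≤ (pos v).1 ∧ (pos v).2 ≤ z.2 ∧ z.2 ≤ (pos u).2 := by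
  cases e with
  | hor H pu pv =>
    rw [cov_hor H pu pv] at hz
    rw [pu, pv]
    exact ⟨le_of_eq hz.1.symm, le_of_eq hz.1, hz.2.1, hz.2.2⟩
  | ver H pu pv =>
    rw [cov_ver H pu pv] at hz
    rw [pu, pv]
    exact ⟨hz.2.1, hz.2.2, le_of_eq hz.1.symm, le_of_eq hz.1⟩

theorem cov_end_left {u v : V m n} (e : EG B u v) : cov u v (pos u) := by
  cases e with
  | hor H pu pv => rw [cov_hor H pu pv, pu]; exact ⟨rfl, Nat.le_of_lt H.hlt, le_rfl⟩
  | ver H pu pv => rw [cov_ver H pu pv, pu]; exact ⟨rfl, le_rfl, Nat.le_of_lt H.hlt⟩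

theorem cov_end_right {u v : V m n} (e : EG B u v) : cov u v (pos v) := by
  cases e with
  | hor H pu pv => rw [cov_hor H pu pv, pv]; exact ⟨rfl, le_rfl, Nat.le_of_lt H.hlt⟩
  | ver H pu pv => rw [cov_ver H pu pv, pv]; exact ⟨rfl, Nat.le_of_lt H.hlt, le_rfl⟩
/-! ### The non-crossing lemma -/

theorem cauchon_nat (hB : IsCauchon B) {r c : ℕ} (hr : r < m) (hc : c < n)
    (hb : ((⟨r, hr⟩ : Fin m), (⟨c, hc⟩ : Fin n)) ∈ B) :
    (∀ c' (hc' : c' < n), c' < c → ((⟨r, hr⟩ : Fin m), (⟨c', hc'⟩ : Fin n)) ∈ B) ∨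
    (∀ r' (hr' : r' < m), r' < r → ((⟨r', hr'⟩ : Fin m), (⟨c, hc⟩ : Fin n)) ∈ B) := by
  rcases hB _ hb with h | h
  · left; intro c' hc' hlt; exact h ⟨c', hc'⟩ hlt
  · right; intro r' hr' hlt; exact h ⟨r', hr'⟩ hlt

theorem crossHV (hB : IsCauchon B) {r c1 c2 r1 r2 c : ℕ} (H : HE B r c1 c2) (W : VE B r1 r2 c)
    (h1 : c2 ≤ c) (h2 : c ≤ c1) (h3 : r1 ≤ r) (h4 : r ≤ r2) :
    (c = c1 ∨ c = c2) ∧ (r = r1 ∨ r = r2) := by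
  have hc : c = c1 ∨ c = c2 := by
    by_contra hcon
    push_neg at hcon
    have hi1 : c2 < c := lt_of_le_of_ne h1 (Ne.symm hcon.2)
    have hi2 : c < c1 := lt_of_le_of_ne h2 hcon.1
    have hcn : c < n := lt_of_lt_of_le hi2 H.hc1
    have hb : ((⟨r, H.hrm⟩ : Fin m), (⟨c, hcn⟩ : Fin n)) ∈ B := H.black c hi1 hi2 _ _
    rcases cauchon_nat hB _ _ hb with hl | ha
    · exact H.white2 H.hrm H.hc2 (hl c2 H.hc2 hi1)
    · rcases lt_or_eq_of_le h3 with h | h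
      · exact W.white1 W.hr1 W.hcn (ha r1 W.hr1 h)
      · subst h; exact W.white1 W.hr1 hcn hb
  refine ⟨hc, ?_⟩
  by_contra hcon
  push_neg at hcon
  have hi1 : r1 < r := lt_of_le_of_ne h3 (Ne.symm hcon.1)
  have hi2 : r < r2 := lt_of_le_of_ne h4 hcon.2
  have hrm : r < m := lt_of_lt_of_le hi2 W.hr2
  have hb : ((⟨r, hrm⟩ : Fin m), (⟨c, W.hcn⟩ : Fin n)) ∈ B := W.black r hi1 hi2 _ _
  rcases hc with rfl | rfl
  · exact H.white1 hrm W.hcn hb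
  · exact H.white2 hrm W.hcn hb

theorem crossHH_int {r c1 c2 c1' c2' zc : ℕ} (H1 : HE B r c1 c2) (H2 : HE B r c1' c2')
    (hi1 : c2 < zc) (hi2 : zc < c1) (hb1 : c2' ≤ zc) (hb2 : zc ≤ c1') :
    c1 = c1' ∧ c2 = c2' := by
  have hzn : zc < n := lt_of_lt_of_le hi2 H1.hc1
  have hi1' : c2' < zc := by
    rcases lt_or_eq_of_le hb1 with h | h
    · exact h
    exfalso
    subst h
    exact H2.white2 H1.hrm hzn (H1.black c2' hi1 hi2 _ _)
  have hi2' : zc < c1' := by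
    rcases lt_or_eq_of_le hb2 with h | h
    · exact h
    exfalso
    subst h
    exact H2.white1 H1.hrm hzn (H1.black zc hi1 hi2 _ _)
  have e2 : c2 = c2' := by
    rcases Nat.lt_trichotomy c2 c2' with h | h | h
    · exact absurd (H1.black c2' h (lt_trans hi1' hi2) _ H2.hc2) (H2.white2 H1.hrm H2.hc2)
    · exact h
    · exact absurd (H2.black c2 h (lt_trans hi1 hi2') _ H1.hc2) (H1.white2 H1.hrm H1.hc2)
  have e1 : c1 = c1' := by
    rcases Nat.lt_trichotomy c1 c1' with h | h | h
    · have hc1n : c1 < n := lt_of_lt_of_le h H2.hc1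
      exact absurd (H2.black c1 (by omega) h _ hc1n) (H1.white1 H1.hrm hc1n)
    · exact h
    · have hc1n : c1' < n := lt_of_lt_of_le h H1.hc1
      exact absurd (H1.black c1' (by omega) h _ hc1n) (H2.white1 H1.hrm hc1n)
  exact ⟨e1, e2⟩

theorem crossHH {r c1 c2 c1' c2' zc : ℕ} (H1 : HE B r c1 c2) (H2 : HE B r c1' c2')
    (ha1 : c2 ≤ zc) (ha2 : zc ≤ c1) (hb1 : c2' ≤ zc) (hb2 : zc ≤ c1') :
    (c1 = c1' ∧ c2 = c2') ∨ ((zc = c1 ∨ zc = c2) ∧ (zc = c1' ∨ zc = c2')) := by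
  by_cases h1 : zc = c1 ∨ zc = c2
  · by_cases h2 : zc = c1' ∨ zc = c2'
    · exact Or.inr ⟨h1, h2⟩
    · push_neg at h2
      have := crossHH_int H2 H1 (lt_of_le_of_ne hb1 (Ne.symm h2.2)) (lt_of_le_of_ne hb2 h2.1)
        ha1 ha2
      exact Or.inl ⟨this.1.symm, this.2.symm⟩
  · push_neg at h1
    exact Or.inl (crossHH_int H1 H2 (lt_of_le_of_ne ha1 (Ne.symm h1.2))
      (lt_of_le_of_ne ha2 h1.1) hb1 hb2)

theorem crossVV_int {c r1 r2 r1' r2' zr : ℕ} (W1 : VE B r1 r2 c) (W2 : VE B r1' r2' c)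
    (hi1 : r1 < zr) (hi2 : zr < r2) (hb1 : r1' ≤ zr) (hb2 : zr ≤ r2') :
    r1 = r1' ∧ r2 = r2' := by
  have hzm : zr < m := lt_of_lt_of_le hi2 W1.hr2
  have hi1' : r1' < zr := by
    rcases lt_or_eq_of_le hb1 with h | h
    · exact h
    exfalso
    subst h
    exact W2.white1 hzm W1.hcn (W1.black r1' hi1 hi2 _ _)
  have hi2' : zr < r2' := by
    rcases lt_or_eq_of_le hb2 with h | h
    · exact h
    exfalso
    subst h
    exact W2.white2 hzm W1.hcn (W1.black zr hi1 hi2 _ _)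
  have e1 : r1 = r1' := by
    rcases Nat.lt_trichotomy r1 r1' with h | h | h
    · exact absurd (W1.black r1' h (lt_trans hi1' hi2) (lt_trans hi1' hzm) W1.hcn)
        (W2.white1 (lt_trans hi1' hzm) W1.hcn)
    · exact h
    · exact absurd (W2.black r1 h (lt_trans hi1 hi2') W1.hr1 W1.hcn)
        (W1.white1 W1.hr1 W1.hcn)
  have e2 : r2 = r2' := by
    rcases Nat.lt_trichotomy r2 r2' with h | h | h
    · have hr2m : r2 < m := lt_of_lt_of_le h W2.hr2
      exact absurd (W2.black r2 (by omega) h hr2m W1.hcn) (W1.white2 hr2m W1.hcn)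
    · exact h
    · have hr2m : r2' < m := lt_of_lt_of_le h W1.hr2
      exact absurd (W1.black r2' (by omega) h hr2m W1.hcn) (W2.white2 hr2m W1.hcn)
  exact ⟨e1, e2⟩

theorem crossVV {c r1 r2 r1' r2' zr : ℕ} (W1 : VE B r1 r2 c) (W2 : VE B r1' r2' c)
    (ha1 : r1 ≤ zr) (ha2 : zr ≤ r2) (hb1 : r1' ≤ zr) (hb2 : zr ≤ r2') :
    (r1 = r1' ∧ r2 = r2') ∨ ((zr = r1 ∨ zr = r2) ∧ (zr = r1' ∨ zr = r2')) := by
  by_cases h1 : zr = r1 ∨ zr = r2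
  · by_cases h2 : zr = r1' ∨ zr = r2'
    · exact Or.inr ⟨h1, h2⟩
    · push_neg at h2
      have := crossVV_int W2 W1 (lt_of_le_of_ne hb1 (Ne.symm h2.1)) (lt_of_le_of_ne hb2 h2.2)
        ha1 ha2
      exact Or.inl ⟨this.1.symm, this.2.symm⟩
  · push_neg at h1
    exact Or.inl (crossVV_int W1 W2 (lt_of_le_of_ne ha1 (Ne.symm h1.1))
      (lt_of_le_of_ne ha2 h1.2) hb1 hb2)

/-- The non-crossing lemma: if the segments of two edges share a lattice point, then either
the edges coincide or the shared point is a common endpoint. -/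
theorem cross (hB : IsCauchon B) {a b a' b' : V m n} (e : EG B a b) (f : EG B a' b')
    {z : ℕ × ℕ} (hz : cov a b z) (hz' : cov a' b' z) :
    (a = a' ∧ b = b') ∨ ∃ w, (w = a ∨ w = b) ∧ (w = a' ∨ w = b') ∧ pos w = z := by
  cases e with
  | @hor r c1 c2 H pa pb =>
    rw [cov_hor H pa pb] at hz
    obtain ⟨hz1, hz2, hz3⟩ := hz
    cases f with
    | @hor r' c1' c2' H' pa' pb' =>
      rw [cov_hor H' pa' pb'] at hz'
      obtain ⟨hz1', hz2', hz3'⟩ := hz'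
      have hrr : r' = r := by omega
      subst hrr
      rcases crossHH H H' hz2 hz3 hz2' hz3' with ⟨e1, e2⟩ | ⟨hc, hc'⟩
      · left
        constructor
        · exact pos_inj (by rw [pa, pa', e1])
        · exact pos_inj (by rw [pb, pb', e2])
      · right
        have hw : ∃ w, (w = a ∨ w = b) ∧ pos w = z := by
          rcases hc with h | h
          · exact ⟨a, Or.inl rfl, by rw [pa]; exact Prod.ext (by omega) (by omega)⟩
          · exact ⟨b, Or.inr rfl, by rw [pb]; exact Prod.ext (by omega) (by omega)⟩
        have hw' : ∃ w, (w = a' ∨ w = b') ∧ pos w = z := by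
          rcases hc' with h | h
          · exact ⟨a', Or.inl rfl, by rw [pa']; exact Prod.ext (by omega) (by omega)⟩
          · exact ⟨b', Or.inr rfl, by rw [pb']; exact Prod.ext (by omega) (by omega)⟩
        obtain ⟨w, hw1, hw2⟩ := hw
        obtain ⟨w', hw1', hw2'⟩ := hw'
        have hww : w = w' := pos_inj (hw2.trans hw2'.symm)
        exact ⟨w, hw1, hww ▸ hw1', hw2⟩
    | @ver r1' r2' c' W pa' pb' =>
      rw [cov_ver W pa' pb'] at hz'
      obtain ⟨hz1', hz2', hz3'⟩ := hz'
      obtain ⟨hc, hr⟩ := crossHV hB H W (by omega) (by omega) (by omega) (by omega)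
      right
      have hw : ∃ w, (w = a ∨ w = b) ∧ pos w = z := by
        rcases hc with h | h
        · exact ⟨a, Or.inl rfl, by rw [pa]; exact Prod.ext (by omega) (by omega)⟩
        · exact ⟨b, Or.inr rfl, by rw [pb]; exact Prod.ext (by omega) (by omega)⟩
      have hw' : ∃ w, (w = a' ∨ w = b') ∧ pos w = z := by
        rcases hr with h | h
        · exact ⟨a', Or.inl rfl, by rw [pa']; exact Prod.ext (by omega) (by omega)⟩
        · exact ⟨b', Or.inr rfl, by rw [pb']; exact Prod.ext (by omega) (by omega)⟩
      obtain ⟨w, hw1, hw2⟩ := hw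
      obtain ⟨w', hw1', hw2'⟩ := hw'
      have hww : w = w' := pos_inj (hw2.trans hw2'.symm)
      exact ⟨w, hw1, hww ▸ hw1', hw2⟩
  | @ver r1 r2 c W pa pb =>
    rw [cov_ver W pa pb] at hz
    obtain ⟨hz1, hz2, hz3⟩ := hz
    cases f with
    | @hor r' c1' c2' H' pa' pb' =>
      rw [cov_hor H' pa' pb'] at hz'
      obtain ⟨hz1', hz2', hz3'⟩ := hz'
      obtain ⟨hc, hr⟩ := crossHV hB H' W (by omega) (by omega) (by omega) (by omega)
      right
      have hw : ∃ w, (w = a ∨ w = b) ∧ pos w = z := by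
        rcases hr with h | h
        · exact ⟨a, Or.inl rfl, by rw [pa]; exact Prod.ext (by omega) (by omega)⟩
        · exact ⟨b, Or.inr rfl, by rw [pb]; exact Prod.ext (by omega) (by omega)⟩
      have hw' : ∃ w, (w = a' ∨ w = b') ∧ pos w = z := by
        rcases hc with h | h
        · exact ⟨a', Or.inl rfl, by rw [pa']; exact Prod.ext (by omega) (by omega)⟩
        · exact ⟨b', Or.inr rfl, by rw [pb']; exact Prod.ext (by omega) (by omega)⟩
      obtain ⟨w, hw1, hw2⟩ := hw
      obtain ⟨w', hw1', hw2'⟩ := hw'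
      have hww : w = w' := pos_inj (hw2.trans hw2'.symm)
      exact ⟨w, hw1, hww ▸ hw1', hw2⟩
    | @ver r1' r2' c' W' pa' pb' =>
      rw [cov_ver W' pa' pb'] at hz'
      obtain ⟨hz1', hz2', hz3'⟩ := hz'
      have hcc : c' = c := by omega
      subst hcc
      rcases crossVV W W' hz2 hz3 hz2' hz3' with ⟨e1, e2⟩ | ⟨hc, hc'⟩
      · left
        constructor
        · exact pos_inj (by rw [pa, pa', e1])
        · exact pos_inj (by rw [pb, pb', e2])
      · right
        have hw : ∃ w, (w = a ∨ w = b) ∧ pos w = z := by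
          rcases hc with h | h
          · exact ⟨a, Or.inl rfl, by rw [pa]; exact Prod.ext (by omega) (by omega)⟩
          · exact ⟨b, Or.inr rfl, by rw [pb]; exact Prod.ext (by omega) (by omega)⟩
        have hw' : ∃ w, (w = a' ∨ w = b') ∧ pos w = z := by
          rcases hc' with h | h
          · exact ⟨a', Or.inl rfl, by rw [pa']; exact Prod.ext (by omega) (by omega)⟩
          · exact ⟨b', Or.inr rfl, by rw [pb']; exact Prod.ext (by omega) (by omega)⟩
        obtain ⟨w, hw1, hw2⟩ := hw
        obtain ⟨w', hw1', hw2'⟩ := hw'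
        have hww : w = w' := pos_inj (hw2.trans hw2'.symm)
        exact ⟨w, hw1, hww ▸ hw1', hw2⟩
/-! ### Vertices on segments, edge directions, successor uniqueness -/

/-- A vertex is proper if, when it is a white vertex, its cell is indeed white. -/
def proper (B : Set (Fin m × Fin n)) : V m n → Prop
  | V.white a b => (a, b) ∉ B
  | _ => True

theorem edge_proper {u v : V m n} (e : Edge B u v) : proper B u ∧ proper B v := by
  cases e with
  | horiz hlt hb1 hb2 hbet => exact ⟨hb1, hb2⟩
  | vert hlt hb1 hb2 hbet => exact ⟨hb1, hb2⟩
  | fromRow hb hbl => exact ⟨trivial, hb⟩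
  | toCol hb hbl => exact ⟨hb, trivial⟩

/-- A proper vertex lying on the segment of an edge is one of its endpoints. -/
theorem vertex_on_cov {u v w : V m n} (e : EG B u v) (hc : cov u v (pos w))
    (hw : proper B w) : w = u ∨ w = v := by
  cases e with
  | @hor r c1 c2 H pu pv =>
    rw [cov_hor H pu pv] at hc
    obtain ⟨h1, h2, h3⟩ := hc
    cases w with
    | white aw bw =>
      simp only [pos] at h1 h2 h3
      rcases Nat.lt_trichotomy bw.1 c1 with hlt | heq | hgt
      · rcases eq_or_lt_of_le h2 with heq2 | hlt2
        · right
          apply pos_inj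
          rw [pv]
          exact Prod.ext h1 heq2.symm
        · exfalso
          apply hw
          rw [show aw = (⟨r, H.hrm⟩ : Fin m) from Fin.ext h1]
          exact H.black bw.1 hlt2 hlt H.hrm bw.2
      · left
        apply pos_inj
        rw [pu]
        exact Prod.ext h1 heq
      · omega
    | row aw =>
      simp only [pos] at h1 h2 h3
      have hc1 : c1 = n := le_antisymm H.hc1 h3
      left
      apply pos_inj
      rw [pu]
      exact Prod.ext h1 hc1.symm
    | col bw =>
      simp only [pos] at h1
      exact absurd (h1 ▸ H.hrm) (lt_irrefl m)
  | @ver r1 r2 c W pu pv =>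
    rw [cov_ver W pu pv] at hc
    obtain ⟨h1, h2, h3⟩ := hc
    cases w with
    | white aw bw =>
      simp only [pos] at h1 h2 h3
      rcases eq_or_lt_of_le h2 with heq | hlt
      · left
        apply pos_inj
        rw [pu]
        exact Prod.ext heq.symm h1
      · rcases eq_or_lt_of_le h3 with heq2 | hlt2
        · right
          apply pos_inj
          rw [pv]
          exact Prod.ext heq2 h1
        · exfalso
          apply hw
          rw [show bw = (⟨c, W.hcn⟩ : Fin n) from Fin.ext h1]
          exact W.black aw.1 hlt hlt2 aw.2 W.hcn
    | row aw =>
      simp only [pos] at h1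
      exact absurd (h1 ▸ W.hcn) (lt_irrefl n)
    | col bw =>
      simp only [pos] at h1 h2 h3
      have hr2 : r2 = m := le_antisymm W.hr2 h3
      right
      apply pos_inj
      rw [pv]
      exact Prod.ext hr2.symm h1
/-! ### Direction of edges, uniqueness of successors -/

theorem isHorizV_iff_horiz {u v : V m n} (e : Edge B u v) :
    (isHorizV u v = true ↔ Horiz u v) := by
  cases e with
  | @horiz i j j' hlt hb1 hb2 hbet =>
    simp only [isHorizV, beq_self_eq_true, true_iff]
    exact ⟨rfl, hlt⟩
  | @vert i i' j hlt hb1 hb2 hbet =>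
    simp only [isHorizV, beq_iff_eq]
    constructor
    · intro h; exact absurd h (Fin.ne_of_lt hlt)
    · rintro ⟨h1, h2⟩
      exact absurd (Fin.ext h1 : i = i') (Fin.ne_of_lt hlt)
  | @fromRow i j hb hbl =>
    constructor
    · intro _; exact ⟨rfl, j.2⟩
    · intro _; rfl
  | @toCol i j hb hbl =>
    constructor
    · intro h; exact absurd h Bool.false_ne_true
    · rintro ⟨h1, h2⟩; exact absurd h1 (Nat.ne_of_lt i.2)

theorem edge_dir {u v : V m n} (e : Edge B u v) : Horiz u v ∨ Vert u v :=
  eg_dir (edge_eg e)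

theorem edge_vert_of_not_horiz {u v : V m n} (e : Edge B u v)
    (h : isHorizV u v = false) : Vert u v := by
  rcases edge_dir e with hh | hv
  · rw [← isHorizV_iff_horiz e] at hh; rw [hh] at h; exact absurd h (by simp)
  · exact hv

theorem edge_horiz_of_isHoriz {u v : V m n} (e : Edge B u v)
    (h : isHorizV u v = true) : Horiz u v := (isHorizV_iff_horiz e).mp h

theorem horiz_succ_unique {u v v' : V m n} (e : Edge B u v) (e' : Edge B u v')
    (h : Horiz u v) (h' : Horiz u v') : v = v' := by
  cases e with
  | @horiz i j j1 hlt hb1 hb2 hbet =>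
    cases e' with
    | horiz hlt' hb1' hb2' hbet' =>
      rename_i j2
      rcases lt_trichotomy j1 j2 with hc | hc | hc
      · exact absurd (hbet j2 hc hlt') hb2'
      · rw [hc]
      · exact absurd (hbet' j1 hc hlt) hb2
    | vert hlt' hb1' hb2' hbet' =>
      exfalso
      obtain ⟨h1, -⟩ := h'
      simp only [pos] at h1
      rename_i i2
      exact absurd h1 (Nat.ne_of_lt hlt')
    | toCol hb' hbl' =>
      exfalso
      obtain ⟨h1, -⟩ := h'
      simp only [pos] at h1
      exact absurd h1 (Nat.ne_of_lt i.2)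
  | @vert i i' j hlt hb1 hb2 hbet =>
    exfalso
    obtain ⟨h1, -⟩ := h
    simp only [pos] at h1
    exact absurd h1 (Nat.ne_of_lt hlt)
  | @fromRow i j hb hbl =>
    cases e' with
    | fromRow hb' hbl' =>
      rename_i j2
      rcases lt_trichotomy j j2 with hc | hc | hc
      · exact absurd (hbl j2 hc) hb'
      · rw [hc]
      · exact absurd (hbl' j hc) hb
  | @toCol i j hb hbl =>
    exfalso
    obtain ⟨h1, -⟩ := h
    simp only [pos] at h1
    exact absurd h1 (Nat.ne_of_lt i.2)

theorem vert_succ_unique {u v v' : V m n} (e : Edge B u v) (e' : Edge B u v')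
    (h : Vert u v) (h' : Vert u v') : v = v' := by
  cases e with
  | @horiz i j j1 hlt hb1 hb2 hbet =>
    exfalso
    obtain ⟨-, h2⟩ := h
    simp only [pos] at h2
    exact absurd h2 (lt_irrefl _)
  | @vert i i1 j hlt hb1 hb2 hbet =>
    cases e' with
    | horiz hlt' hb1' hb2' hbet' =>
      exfalso
      obtain ⟨-, h2⟩ := h'
      simp only [pos] at h2
      exact absurd h2 (lt_irrefl _)
    | vert hlt' hb1' hb2' hbet' =>
      rename_i i2
      rcases lt_trichotomy i1 i2 with hc | hc | hc
      · exact absurd (hbet' i1 hlt hc) hb2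
      · rw [hc]
      · exact absurd (hbet i2 hlt' hc) hb2'
    | toCol hb' hbl' =>
      exact absurd (hbl' i1 hlt) hb2
  | @fromRow i j hb hbl =>
    exfalso
    obtain ⟨h1, -⟩ := h
    simp only [pos] at h1
    exact absurd h1.symm (Nat.ne_of_lt j.2)
  | @toCol i j hb hbl =>
    cases e' with
    | horiz hlt' hb1' hb2' hbet' =>
      exfalso
      obtain ⟨-, h2⟩ := h'
      simp only [pos] at h2
      exact absurd h2 (lt_irrefl _)
    | vert hlt' hb1' hb2' hbet' =>
      rename_i i2
      exact absurd (hbl i2 hlt') hb2'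
    | toCol hb' hbl' => rfl
/-! ### Curves of paths and monotonicity -/

/-- The curve of a vertex list: all lattice points covered by its consecutive segments. -/
def CC (l : List (V m n)) (z : ℕ × ℕ) : Prop := ∃ x y, Cons l x y ∧ cov x y z

/-- The weak staircase order on positions. -/
def GS (u v : V m n) : Prop :=
  (pos u).1 ≤ (pos v).1 ∧ (pos v).2 ≤ (pos u).2 ∧ pos u ≠ pos v

theorem gs_trans : ∀ (a b c : V m n), GS a b → GS b c → GS a c := by
  rintro a b c ⟨h1, h2, h3⟩ ⟨h4, h5, h6⟩
  refine ⟨le_trans h1 h4, le_trans h5 h2, ?_⟩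
  intro hac
  apply h3
  have e1 : (pos a).1 = (pos b).1 := by rw [hac] at h1 ⊢; omega
  have e2 : (pos a).2 = (pos b).2 := by rw [hac] at h2 ⊢; omega
  exact Prod.ext e1 e2

theorem edge_gs {u v : V m n} (e : Edge B u v) : GS u v := by
  rcases edge_dir e with ⟨h1, h2⟩ | ⟨h1, h2⟩
  · exact ⟨le_of_eq h1, le_of_lt h2, fun hp => by rw [hp] at h2; omega⟩
  · exact ⟨le_of_lt h2, le_of_eq h1.symm, fun hp => by rw [hp] at h2; omega⟩

theorem chain_pairwise_gs {l : List (V m n)} (hc : l.Chain' (Edge B)) : l.Pairwise GS :=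
  pairwise_of_chain' gs_trans (hc.imp (fun {_ _} e => edge_gs e))

/-- Everything after `u` in a path is `GS`-after `u`. -/
theorem gs_of_split {l t s : List (V m n)} {u : V m n} (hc : l.Chain' (Edge B))
    (hl : l = t ++ u :: s) : ∀ x ∈ s, GS u x := by
  subst hl
  have hp := chain_pairwise_gs hc
  rw [List.pairwise_append] at hp
  have := hp.2.1
  rw [List.pairwise_cons] at this
  exact this.1

/-- Everything before `u` in a path is `GS`-before `u`. -/
theorem gs_of_split' {l t s : List (V m n)} {u : V m n} (hc : l.Chain' (Edge B))
    (hl : l = t ++ u :: s) : ∀ x ∈ t, GS x u := by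
  subst hl
  have hp := chain_pairwise_gs hc
  rw [List.pairwise_append] at hp
  intro x hx
  exact hp.2.2 x hx u (by simp)

theorem CC_cons {a b : V m n} {rest : List (V m n)} {z : ℕ × ℕ} :
    CC (a :: b :: rest) z ↔ cov a b z ∨ CC (b :: rest) z := by
  constructor
  · rintro ⟨x, y, hxy, hcov⟩
    rcases cons_cons_iff.mp hxy with ⟨rfl, hy⟩ | h
    · simp only [List.head?_cons, Option.some.injEq] at hy
      subst hy; exact Or.inl hcov
    · exact Or.inr ⟨x, y, h, hcov⟩
  · rintro (hcov | ⟨x, y, h, hcov⟩)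
    · exact ⟨a, b, ⟨[], rest, rfl⟩, hcov⟩
    · exact ⟨x, y, h.cons a, hcov⟩

theorem CC_of_tail {a : V m n} {rest : List (V m n)} {z : ℕ × ℕ} (h : CC rest z) :
    CC (a :: rest) z := by
  obtain ⟨x, y, hxy, hcov⟩ := h
  exact ⟨x, y, hxy.cons a, hcov⟩

theorem not_CC_nil {z : ℕ × ℕ} : ¬ CC ([] : List (V m n)) z := by
  rintro ⟨x, y, ⟨l1, l2, h⟩, -⟩
  simp at h

theorem not_CC_singleton {a : V m n} {z : ℕ × ℕ} : ¬ CC [a] z := by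
  rintro ⟨x, y, ⟨l1, l2, h⟩, -⟩
  cases l1 with
  | nil => simp at h
  | cons b l1' => simp at h

/-- The position of any member of a path with at least two vertices lies on its curve. -/
theorem mem_CC {l : List (V m n)} (hc : l.Chain' (Edge B)) (hl : 2 ≤ l.length) {v : V m n}
    (hv : v ∈ l) : CC l (pos v) := by
  obtain ⟨x, y, hxy, hm⟩ := mem_pair_of_mem hl hv
  have he : EG B x y := edge_eg (chain'_rel_of_cons hc hxy)
  rcases hm with rfl | rfl
  · exact ⟨_, _, hxy, cov_end_left he⟩
  · exact ⟨_, _, hxy, cov_end_right he⟩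

/-- All points of the curve are below-left of the head of the path. -/
theorem CC_head_bounds {l : List (V m n)} (hc : l.Chain' (Edge B)) {a : V m n}
    (ha : l.head? = some a) {z : ℕ × ℕ} (hz : CC l z) :
    (pos a).1 ≤ z.1 ∧ z.2 ≤ (pos a).2 := by
  obtain ⟨x, y, hxy, hcov⟩ := hz
  have he : EG B x y := edge_eg (chain'_rel_of_cons hc hxy)
  have hb := cov_bounds he hcov
  obtain ⟨l1, l2, rfl⟩ := hxy
  cases l1 with
  | nil =>
    simp only [List.nil_append, List.head?_cons, Option.some.injEq] at ha
    subst ha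
    exact ⟨hb.1, hb.2.2.2⟩
  | cons c l1' =>
    simp only [List.cons_append, List.head?_cons, Option.some.injEq] at ha
    have hchain : (c :: (l1' ++ x :: y :: l2)).Chain' GS :=
      hc.imp (fun {_ _} e => edge_gs e)
    have hgs : GS c x := rel_of_chain'_mem gs_trans hchain x (by simp)
    rw [← ha]
    exact ⟨le_trans hgs.1 hb.1, le_trans hb.2.2.2 hgs.2.1⟩
/-! ### Staircase walk lemmas -/

/-- If the curve avoids the closed lower-left quadrant of `(r,c)` but meets the one of
`(r',c)`, then it passes through `(r2, c)` for some `r < r2 ≤ r'`. -/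
theorem laDown : ∀ (l : List (V m n)), l.Chain' (Edge B) → ∀ (a : V m n),
    l.head? = some a → ∀ (r r' c : ℕ), c ≤ (pos a).2 →
    (∀ z : ℕ × ℕ, CC l z → ¬(z.1 ≤ r ∧ z.2 ≤ c)) →
    ∀ z0 : ℕ × ℕ, CC l z0 → z0.1 ≤ r' → z0.2 ≤ c →
    ∃ r2, r < r2 ∧ r2 ≤ r' ∧ CC l (r2, c) := by
  intro l
  induction l with
  | nil => intro _ a ha; simp at ha
  | cons a' tail ih =>
    intro hc a ha r r' c hca hforb z0 hz0 hz1 hz2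
    simp only [List.head?_cons, Option.some.injEq] at ha
    subst ha
    cases tail with
    | nil => exact absurd hz0 not_CC_singleton
    | cons b rest =>
      have he : Edge B a' b := (List.isChain_cons_cons.mp hc).1
      rcases CC_cons.mp hz0 with hcov | hcc
      · cases edge_eg he with
        | @hor r0 c1 c2 H pa pb =>
          rw [cov_hor H pa pb] at hcov
          obtain ⟨h1, h2, h3⟩ := hcov
          rw [pa] at hca
          have hmem : CC (a' :: b :: rest) (r0, c) :=
            CC_cons.mpr (Or.inl ((cov_hor H pa pb).mpr ⟨rfl, by omega, hca⟩))
          refine ⟨r0, ?_, by omega, hmem⟩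
          by_contra hcon
          push_neg at hcon
          exact hforb _ hmem ⟨hcon, le_rfl⟩
        | @ver r1 r2 c0 W pa pb =>
          rw [cov_ver W pa pb] at hcov
          obtain ⟨h1, h2, h3⟩ := hcov
          rw [pa] at hca
          have hc0 : c0 = c := by omega
          refine ⟨z0.1, ?_, hz1, ?_⟩
          · by_contra hcon
            push_neg at hcon
            exact hforb z0 hz0 ⟨hcon, hz2⟩
          · have hcz : c = z0.2 := by omega
            have hzz : (z0.1, c) = z0 := by rw [hcz]
            rw [hzz]
            exact hz0
      · by_cases hbc : c ≤ (pos b).2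
        · have hforb' : ∀ z : ℕ × ℕ, CC (b :: rest) z → ¬(z.1 ≤ r ∧ z.2 ≤ c) :=
            fun z hz => hforb z (CC_cons.mpr (Or.inr hz))
          obtain ⟨r2, hr2a, hr2b, hr2c⟩ :=
            ih (List.isChain_cons_cons.mp hc).2 b rfl r r' c hbc hforb' z0 hcc hz1 hz2
          exact ⟨r2, hr2a, hr2b, CC_cons.mpr (Or.inr hr2c)⟩
        · push_neg at hbc
          cases edge_eg he with
          | @hor r0 c1 c2 H pa pb =>
            rw [pa] at hca
            have hmem : CC (a' :: b :: rest) (r0, c) := by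
              apply CC_cons.mpr (Or.inl ((cov_hor H pa pb).mpr ⟨rfl, ?_, hca⟩))
              rw [pb] at hbc
              simp only [] at hbc
              omega
            refine ⟨r0, ?_, ?_, hmem⟩
            · by_contra hcon
              push_neg at hcon
              exact hforb _ hmem ⟨hcon, le_rfl⟩
            · have hhb := CC_head_bounds (List.isChain_cons_cons.mp hc).2 rfl hcc
              rw [pb] at hhb
              simp only [] at hhb
              omega
          | @ver r1 r2 c0 W pa pb =>
            exfalso
            rw [pa] at hca
            rw [pb] at hbc
            simp only [] at hca hbc
            omega

/-- Intermediate value: a staircase curve meets every row between its head and its last. -/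
theorem rowIVT : ∀ (l : List (V m n)), l.Chain' (Edge B) → ∀ a, l.head? = some a →
    ∀ t, l.getLast? = some t → ∀ r : ℕ, (pos a).1 ≤ r → r ≤ (pos t).1 →
    ∃ g, g ≤ (pos a).2 ∧ (CC l (r, g) ∨ ∃ w ∈ l, pos w = (r, g)) := by
  intro l
  induction l with
  | nil => intro _ a ha; simp at ha
  | cons a' tail ih =>
    intro hc a ha t ht r hr1 hr2
    simp only [List.head?_cons, Option.some.injEq] at ha
    subst ha
    cases tail with
    | nil =>
      simp only [List.getLast?_singleton, Option.some.injEq] at ht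
      subst ht
      have : (pos a').1 = r := le_antisymm hr1 hr2
      exact ⟨(pos a').2, le_rfl, Or.inr ⟨a', by simp, by rw [← this]⟩⟩
    | cons b rest =>
      have he : Edge B a' b := (List.isChain_cons_cons.mp hc).1
      have ht' : (b :: rest).getLast? = some t := by
        rw [← ht]; exact (List.getLast?_cons_cons).symm
      rcases edge_dir he with hh | hv
      · obtain ⟨e1, e2⟩ := hh
        obtain ⟨g, hg1, hg2⟩ := ih (List.isChain_cons_cons.mp hc).2 b rfl t ht' r (by omega) hr2
        refine ⟨g, by omega, ?_⟩
        rcases hg2 with h | ⟨w, hw1, hw2⟩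
        · exact Or.inl (CC_of_tail h)
        · exact Or.inr ⟨w, by simp [hw1], hw2⟩
      · obtain ⟨e1, e2⟩ := hv
        by_cases hrb : r ≤ (pos b).1
        · refine ⟨(pos a').2, le_rfl, Or.inl ?_⟩
          cases edge_eg he with
          | @hor r0 c1 c2 H pa pb =>
            exfalso
            have pa1 : (pos a').1 = r0 := by rw [pa]
            have pb1 : (pos b).1 = r0 := by rw [pb]
            omega
          | @ver r1 r2 c0 W pa pb =>
            apply CC_cons.mpr (Or.inl ((cov_ver W pa pb).mpr ?_))
            have pa1 : (pos a').1 = r1 := by rw [pa]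
            have pa2 : (pos a').2 = c0 := by rw [pa]
            have pb1 : (pos b).1 = r2 := by rw [pb]
            refine ⟨pa2, ?_, ?_⟩
            · show r1 ≤ r
              omega
            · show r ≤ r2
              omega
        · push_neg at hrb
          obtain ⟨g, hg1, hg2⟩ := ih (List.isChain_cons_cons.mp hc).2 b rfl t ht' r (by omega) hr2
          refine ⟨g, by omega, ?_⟩
          rcases hg2 with h | ⟨w, hw1, hw2⟩
          · exact Or.inl (CC_of_tail h)
          · exact Or.inr ⟨w, by simp [hw1], hw2⟩

/-- If the curve meets the lower-left quadrant of `(r,c)` and ends at a row `≥ r`, it meets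
the row `r` at some column `≤ c`. -/
theorem lbLeft : ∀ (l : List (V m n)), l.Chain' (Edge B) → ∀ t, l.getLast? = some t →
    ∀ (r c : ℕ), r ≤ (pos t).1 → ∀ z0 : ℕ × ℕ, CC l z0 → z0.1 ≤ r → z0.2 ≤ c →
    ∃ c', c' ≤ c ∧ (CC l (r, c') ∨ ∃ w ∈ l, pos w = (r, c')) := by
  intro l
  induction l with
  | nil => intro _ t ht; simp at ht
  | cons a' tail ih =>
    intro hc t ht r c hrt z0 hz0 hz1 hz2
    cases tail with
    | nil => exact absurd hz0 not_CC_singleton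
    | cons b rest =>
      have he : Edge B a' b := (List.isChain_cons_cons.mp hc).1
      have ht' : (b :: rest).getLast? = some t := by
        rw [← ht]; exact (List.getLast?_cons_cons).symm
      have lift : (∃ c', c' ≤ c ∧ (CC (b :: rest) (r, c') ∨ ∃ w ∈ b :: rest, pos w = (r, c'))) →
          ∃ c', c' ≤ c ∧ (CC (a' :: b :: rest) (r, c') ∨ ∃ w ∈ a' :: b :: rest, pos w = (r, c')) := by
        rintro ⟨c', h1, h2 | ⟨w, hw1, hw2⟩⟩
        · exact ⟨c', h1, Or.inl (CC_of_tail h2)⟩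
        · exact ⟨c', h1, Or.inr ⟨w, by simp [hw1], hw2⟩⟩
      rcases CC_cons.mp hz0 with hcov | hcc
      · cases edge_eg he with
        | @hor r0 c1 c2 H pa pb =>
          rw [cov_hor H pa pb] at hcov
          obtain ⟨h1, h2, h3⟩ := hcov
          rcases eq_or_lt_of_le (show r0 ≤ r by omega) with heq | hlt
          · refine ⟨z0.2, hz2, Or.inl (CC_cons.mpr (Or.inl ((cov_hor H pa pb).mpr ?_)))⟩
            exact ⟨heq.symm, h2, h3⟩
          · apply lift
            have pb1 : (pos b).1 = r0 := by rw [pb]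
            have pb2 : (pos b).2 = c2 := by rw [pb]
            obtain ⟨g, hg1, hg2⟩ := rowIVT (b :: rest) (List.isChain_cons_cons.mp hc).2 b rfl t ht' r
              (by omega) hrt
            exact ⟨g, by omega, hg2⟩
        | @ver r1 r2 c0 W pa pb =>
          rw [cov_ver W pa pb] at hcov
          obtain ⟨h1, h2, h3⟩ := hcov
          have pa1 : (pos a').1 = r1 := by rw [pa]
          have pb1 : (pos b).1 = r2 := by rw [pb]
          have pb2 : (pos b).2 = c0 := by rw [pb]
          by_cases hrb : r ≤ (pos b).1
          · refine ⟨c0, by omega, Or.inl (CC_cons.mpr (Or.inl ((cov_ver W pa pb).mpr ?_)))⟩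
            refine ⟨rfl, ?_, ?_⟩
            · show r1 ≤ r
              omega
            · show r ≤ r2
              omega
          · push_neg at hrb
            apply lift
            obtain ⟨g, hg1, hg2⟩ := rowIVT (b :: rest) (List.isChain_cons_cons.mp hc).2 b rfl t ht' r
              (le_of_lt hrb) hrt
            exact ⟨g, by omega, hg2⟩
      · apply lift
        exact ih (List.isChain_cons_cons.mp hc).2 t ht' r c hrt z0 hcc hz1 hz2

/-- If the path leaves `u` vertically, no point of its curve is strictly up-left of `u`. -/
theorem quadA {l : List (V m n)} (hc : l.Chain' (Edge B)) {u y : V m n}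
    (hcons : Cons l u y) (hv : Vert u y) :
    ∀ z, CC l z → (pos u).2 ≤ z.2 ∨ (pos u).1 < z.1 := by
  obtain ⟨t, s', hl⟩ := hcons
  intro z hz
  obtain ⟨x, y', hxy', hcov⟩ := hz
  have he : EG B x y' := edge_eg (chain'_rel_of_cons hc hxy')
  have hb := cov_bounds he hcov
  rw [hl] at hxy'
  rcases cons_append_cases hxy' with h1 | h1 | ⟨h1, h2⟩
  · -- pair inside the prefix t : y' ∈ t
    have : GS y' u := gs_of_split' hc hl y' h1.mem_right
    left
    exact le_trans this.2.1 hb.2.2.1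
  · -- pair inside u :: y :: s'
    rcases cons_cons_iff.mp h1 with ⟨rfl, hy'⟩ | h1'
    · simp only [List.head?_cons, Option.some.injEq] at hy'
      subst hy'
      left
      rw [hv.1]
      exact hb.2.2.1
    · -- x ∈ y :: s' : strictly after u
      have hx : x ∈ y :: s' := h1'.mem_left
      have hrow : (pos y).1 ≤ (pos x).1 := by
        rcases List.mem_cons.mp hx with rfl | hx'
        · exact le_rfl
        · exact (gs_of_split hc (by rw [hl]; simp : l = (t ++ [u]) ++ y :: s') x hx').1
      right
      calc (pos u).1 < (pos y).1 := hv.2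
        _ ≤ (pos x).1 := hrow
        _ ≤ z.1 := hb.1
  · -- junction : y' = u
    rw [List.head?_cons, Option.some_inj] at h2
    left
    rw [h2]
    exact hb.2.2.1
/-! ### The main invariants -/

/-- The dominated (closed lower-right) region of a curve. -/
def InD (l : List (V m n)) (z : ℕ × ℕ) : Prop :=
  ∃ w : ℕ × ℕ, CC l w ∧ w.1 ≤ z.1 ∧ w.2 ≤ z.2

theorem mem_proper {l : List (V m n)} (hc : l.Chain' (Edge B)) (hl : 2 ≤ l.length) {v : V m n}
    (hv : v ∈ l) : proper B v := by
  obtain ⟨x, y, hxy, hm⟩ := mem_pair_of_mem hl hv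
  have := edge_proper (chain'_rel_of_cons hc hxy)
  rcases hm with rfl | rfl
  exacts [this.1, this.2]

theorem list_induct {α : Type*} (P : α → Prop) :
    ∀ (l : List α), (∀ u w, Cons l u w → P u → P w) → (∀ a, l.head? = some a → P a) →
    ∀ v ∈ l, P v := by
  intro l
  induction l with
  | nil => intro _ _ v hv; simp at hv
  | cons a rest ih =>
    intro hstep hhead v hv
    rcases List.mem_cons.mp hv with rfl | hv'
    · exact hhead v rfl
    · cases rest with
      | nil => simp at hv'
      | cons b rest' =>
        refine ih (fun u w hc hu => hstep u w (hc.cons a) hu) ?_ v hv'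
        intro a' ha'
        simp only [List.head?_cons, Option.some.injEq] at ha'
        subst ha'
        exact hstep a b ⟨[], rest', rfl⟩ (hhead a rfl)

/-- Lemma A: a path disjoint from `S` starting dominated by `S`'s head stays dominated. -/
theorem lemA (hB : IsCauchon B) {S : List (V m n)} (hSc : S.Chain' (Edge B))
    (hS2 : 2 ≤ S.length) {aS tS : V m n} (haS : S.head? = some aS)
    (htS : S.getLast? = some tS) (htSm : (pos tS).1 = m)
    {R : List (V m n)} (hRc : R.Chain' (Edge B)) {aR : V m n} (haR : R.head? = some aR)
    (hrow : (pos aS).1 ≤ (pos aR).1) (hcolS : (pos aS).2 = n) (hcolR : (pos aR).2 = n)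
    (hd : ∀ v ∈ R, v ∉ S) :
    ∀ v ∈ R, InD S (pos v) := by
  apply list_induct (fun v => InD S (pos v)) R
  · -- step
    intro u w hcons hu
    have hme : u ∈ R := hcons.mem_left
    have hmw : w ∈ R := hcons.mem_right
    have e : Edge B u w := chain'_rel_of_cons hRc hcons
    rcases edge_dir e with hh | hv
    · -- horizontal step to the left
      obtain ⟨z0, hz0, hz1, hz2⟩ := hu
      have hrm : (pos u).1 ≤ (pos tS).1 := by rw [htSm]; exact pos_fst_le u
      obtain ⟨c', hc'le, hc'mem⟩ :=
        lbLeft S hSc tS htS (pos u).1 (pos u).2 hrm z0 hz0 hz1 hz2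
      have hCCpt : CC S ((pos u).1, c') := by
        rcases hc'mem with h | ⟨wS, hwS1, hwS2⟩
        · exact h
        · rw [← hwS2]; exact mem_CC hSc hS2 hwS1
      -- the point cannot lie on the segment of the edge (u, w)
      have hnotcov : ¬ ((pos w).2 ≤ c') := by
        intro hge
        have hcovR : cov u w ((pos u).1, c') := Or.inl ⟨rfl, hh.1, hge, hc'le⟩
        obtain ⟨x, y, hxy, hcovS⟩ := hCCpt
        have fS : Edge B x y := chain'_rel_of_cons hSc hxy
        rcases hc'mem with h | ⟨wS, hwS1, hwS2⟩
        · rcases cross hB (edge_eg e) (edge_eg fS) hcovR hcovS with ⟨rfl, rfl⟩ |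
            ⟨w0, hw0e, hw0f, -⟩
          · exact hd u hme hxy.mem_left
          · have hw0R : w0 ∈ R := by rcases hw0e with rfl | rfl; exacts [hme, hmw]
            have hw0S : w0 ∈ S := by
              rcases hw0f with rfl | rfl; exacts [hxy.mem_left, hxy.mem_right]
            exact hd w0 hw0R hw0S
        · have : wS = u ∨ wS = w := by
            apply vertex_on_cov (edge_eg e) _ (mem_proper hSc hS2 hwS1)
            rw [hwS2]; exact hcovR
          rcases this with rfl | rfl
          · exact hd wS hme hwS1
          · exact hd wS hmw hwS1
      push_neg at hnotcov
      exact ⟨((pos u).1, c'), hCCpt, by rw [← hh.1], le_of_lt hnotcov⟩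
    · -- vertical step downwards
      obtain ⟨hv1, hv2⟩ := hv
      obtain ⟨z0, hz0, hz1, hz2⟩ := hu
      exact ⟨z0, hz0, by omega, by omega⟩
  · -- base
    intro a ha
    rw [ha] at haR
    simp only [Option.some.injEq] at haR
    subst haR
    refine ⟨pos aS, mem_CC hSc hS2 ?_, hrow, by omega⟩
    exact List.mem_of_mem_head? haS

/-- Lemma U: the upper path stays out of the strictly-dominated region of `S`. -/
theorem lemU (hB : IsCauchon B) {S : List (V m n)} (hSc : S.Chain' (Edge B))
    (hS2 : 2 ≤ S.length) (hSn : S.Nodup) {aS : V m n} (haS : S.head? = some aS)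
    (hcolS : (pos aS).2 = n)
    {L : List (V m n)} (hLpairs : ∀ u w, Cons L u w → Edge B u w)
    {aL : V m n} (haL : L.head? = some aL) (haLS : aL ∈ S)
    (hproper : ∀ v ∈ L, proper B v)
    (hH : ∀ u w, Cons L u w → u ∈ S → (Cons S u w ∨ ∃ y, Cons S u y ∧ Vert u y)) :
    ∀ v ∈ L, CC S (pos v) ∨ ¬ InD S (pos v) := by
  apply list_induct (fun v => CC S (pos v) ∨ ¬ InD S (pos v)) L
  · -- step
    intro u w hcons hu
    have e : Edge B u w := hLpairs u w hcons
    rcases hu with hIn | hNot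
    · -- u is on the curve of S
      by_cases hwCC : CC S (pos w)
      · exact Or.inl hwCC
      by_cases hwInD : InD S (pos w)
      swap
      · exact Or.inr hwInD
      exfalso
      -- u is a vertex of S
      have huS : u ∈ S := by
        obtain ⟨x, y, hxy, hcov⟩ := hIn
        have : u = x ∨ u = y := by
          apply vertex_on_cov (edge_eg (chain'_rel_of_cons hSc hxy)) hcov
          exact hproper u hcons.mem_left
        rcases this with rfl | rfl
        exacts [hxy.mem_left, hxy.mem_right]
      rcases hH u w hcons huS with hSc' | ⟨y0, hCons0, hv0⟩
      · exact hwCC (mem_CC hSc hS2 hSc'.mem_right)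
      · have e0 : Edge B u y0 := chain'_rel_of_cons hSc hCons0
        rcases edge_dir e with hh | hv
        · -- our step is horizontal; S leaves u vertically: quadrant argument
          obtain ⟨z, hzCC, hz1, hz2⟩ := hwInD
          rcases quadA hSc hCons0 hv0 z hzCC with h | h
          · have := hh.2
            omega
          · have := hh.1
            omega
        · -- our step is vertical: it must be the S-edge
          have : w = y0 := vert_succ_unique e e0 hv hv0
          subst this
          exact hwCC (mem_CC hSc hS2 hCons0.mem_right)
    · -- u is strictly above the curve of S
      rcases edge_dir e with hh | hv
      · -- horizontal step: stays outside the dominated region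
        obtain ⟨hh1, hh2⟩ := hh
        refine Or.inr ?_
        rintro ⟨z, hz, h1, h2⟩
        exact hNot ⟨z, hz, by omega, by omega⟩
      · -- vertical step
        by_cases hwInD : InD S (pos w)
        swap
        · exact Or.inr hwInD
        obtain ⟨hv1, hv2⟩ := hv
        obtain ⟨z0, hz0, hz1, hz2⟩ := hwInD
        have hforb : ∀ z : ℕ × ℕ, CC S z → ¬(z.1 ≤ (pos u).1 ∧ z.2 ≤ (pos u).2) :=
          fun z hz hcon => hNot ⟨z, hz, hcon.1, hcon.2⟩
        obtain ⟨r2, hr2a, hr2b, hr2c⟩ :=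
          laDown S hSc aS haS (pos u).1 (pos w).1 (pos u).2
            (by rw [hcolS]; exact pos_snd_le u) hforb z0 hz0 hz1 (by omega)
        have hcovR : cov u w (r2, (pos u).2) := Or.inr ⟨rfl, hv1, by omega, by omega⟩
        obtain ⟨x, y, hxy, hcovS⟩ := hr2c
        rcases cross hB (edge_eg e) (edge_eg (chain'_rel_of_cons hSc hxy)) hcovR hcovS with
          ⟨rfl, rfl⟩ | ⟨w0, hw0e, hw0f, hpos⟩
        · exact Or.inl (mem_CC hSc hS2 hxy.mem_right)
        · rcases hw0e with rfl | rfl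
          · exfalso
            have : (pos w0).1 = r2 := by rw [hpos]
            omega
          · left
            have hw0S : w0 ∈ S := by
              rcases hw0f with rfl | rfl; exacts [hxy.mem_left, hxy.mem_right]
            exact mem_CC hSc hS2 hw0S
  · -- base
    intro a ha
    rw [ha] at haL
    simp only [Option.some.injEq] at haL
    subst haL
    exact Or.inl (mem_CC hSc hS2 haLS)
/-! ### Structure of `upperAux` -/

theorem mem_of_getLast?' {α : Type*} {l : List α} {a : α} (h : l.getLast? = some a) :
    a ∈ l := by
  obtain ⟨hne, h2⟩ := List.mem_getLast?_eq_getLast (show a ∈ l.getLast? by rw [h]; rfl)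
  rw [h2]
  exact List.getLast_mem hne

theorem cons_singleton {α : Type*} {a u w : α} (h : Cons [a] u w) : False := by
  obtain ⟨t, s, h⟩ := h
  have := congrArg List.length h
  simp [List.length_append] at this
  omega

theorem filter_head_split {α : Type*} {p : α → Bool} :
    ∀ {l : List α} {v : α} {rest : List α}, l.filter p = v :: rest →
      ∃ t l', l = t ++ v :: l' ∧ (∀ a ∈ t, p a = false) ∧ p v = true ∧ l'.filter p = rest := by
  intro l
  induction l with
  | nil => intro v rest h; simp at h
  | cons a l' ih =>
    intro v rest h
    by_cases hpa : p a = true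
    · rw [List.filter_cons_of_pos hpa] at h
      simp only [List.cons.injEq] at h
      obtain ⟨rfl, h2⟩ := h
      exact ⟨[], l', rfl, by simp, hpa, h2⟩
    · rw [List.filter_cons_of_neg hpa] at h
      obtain ⟨t, l'', h1, h2, h3, h4⟩ := ih h
      refine ⟨a :: t, l'', by rw [h1]; rfl, ?_, h3, h4⟩
      intro b hb
      rcases List.mem_cons.mp hb with rfl | hb'
      · simpa using hpa
      · exact h2 b hb'

theorem takeWhile_dropWhile_split {α : Type*} {p : α → Bool} :
    ∀ (t : List α) {l' : List α} {v : α}, (∀ a ∈ t, p a = true) → p v = false →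
      ((t ++ v :: l').takeWhile p = t ∧ (t ++ v :: l').dropWhile p = v :: l') := by
  intro t
  induction t with
  | nil =>
    intro l' v _ hv
    constructor
    · simp [List.takeWhile_cons, hv]
    · simp [List.dropWhile_cons, hv]
  | cons a t' ih =>
    intro l' v ht hv
    have hpa : p a = true := ht a (by simp)
    obtain ⟨ih1, ih2⟩ := ih (l' := l') (v := v) (fun y hy => ht y (by simp [hy])) hv
    constructor
    · simp only [List.cons_append, List.takeWhile_cons, hpa, if_true, ih1]
    · simp only [List.cons_append, List.dropWhile_cons, hpa, if_true, ih2]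

theorem not_mem_left_of_nodup {α : Type*} {β l' : List α} {v : α}
    (h : (β ++ v :: l').Nodup) : v ∉ β := by
  rw [List.nodup_append] at h
  intro hv
  exact h.2.2 v hv v (by simp) rfl

theorem gs_antisymm {u x : V m n} (h1 : GS u x) (h2 : GS x u) : False := by
  obtain ⟨a1, a2, a3⟩ := h1
  obtain ⟨b1, b2, b3⟩ := h2
  exact a3 (Prod.ext (by omega) (by omega))

/-- The structural specification of `upperAux`. -/
theorem upperAux_spec {LP LQ : List (V m n)} (hPc : LP.Chain' (Edge B))
    (hQc : LQ.Chain' (Edge B)) (hPn : LP.Nodup) (hQn : LQ.Nodup) :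
    ∀ (fuel : ℕ) (x : V m n) (l1 l2 t1 t2 : List (V m n)),
    LP = t1 ++ x :: l1 → LQ = t2 ++ x :: l2 →
    (x :: l1).length + (x :: l2).length ≤ fuel →
    (upperAux fuel (x :: l1) (x :: l2)).head? = some x ∧
    (∀ v ∈ upperAux fuel (x :: l1) (x :: l2), v ∈ LP ∨ v ∈ LQ) ∧
    (∀ u w, Cons (upperAux fuel (x :: l1) (x :: l2)) u w →
      ((Cons LP u w ∨ Cons LQ u w) ∧
       (u ∈ LP → (Cons LP u w ∨ ∃ y, Cons LP u y ∧ Vert u y)) ∧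
       (u ∈ LQ → (Cons LQ u w ∨ ∃ y, Cons LQ u y ∧ Vert u y)))) := by
  intro fuel
  induction fuel with
  | zero =>
    intro x l1 l2 t1 t2 hLP hLQ hlen
    simp at hlen
  | succ fuel ih =>
    intro x l1 l2 t1 t2 hLP hLQ hlen
    rcases hfil : l1.filter (fun y => l2.contains y) with - | ⟨v, restf⟩
    · -- no common vertex below: the result is [x]
      have hun : upperAux (fuel+1) (x::l1) (x::l2) = [x] := by
        simp only [upperAux, hfil]
      rw [hun]
      refine ⟨rfl, ?_, ?_⟩
      · intro v' hv'
        simp only [List.mem_singleton] at hv'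
        subst hv'
        exact Or.inl (by rw [hLP]; simp)
      · intro u w hc
        exact absurd hc cons_singleton
    · -- v is the first common vertex below x
      obtain ⟨α, l1', hsplit1, hαfalse, hvtrue, hrestf⟩ := filter_head_split hfil
      have hvl2 : v ∈ l2 := by simpa using hvtrue
      have hαl2 : ∀ a ∈ α, a ∉ l2 := by
        intro a ha hal2
        have := hαfalse a ha
        simp only [Bool.eq_false_iff] at this
        exact this (by simpa using hal2)
      -- nodup facts
      have hx1n : (x :: l1).Nodup := (List.sublist_append_right t1 _).nodup (hLP ▸ hPn)
      have hx2n : (x :: l2).Nodup := (List.sublist_append_right t2 _).nodup (hLQ ▸ hQn)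
      have hxl1 : x ∉ l1 := (List.nodup_cons.mp hx1n).1
      have hxl2 : x ∉ l2 := (List.nodup_cons.mp hx2n).1
      obtain ⟨β, l2', hsplit2⟩ := List.append_of_mem hvl2
      have hvβ : v ∉ β :=
        not_mem_left_of_nodup (hsplit2 ▸ (List.nodup_cons.mp hx2n).2)
      -- takeWhile / dropWhile computations
      have htd1 := takeWhile_dropWhile_split (p := fun y => y != v) α (l' := l1') (v := v)
        (fun a ha => by
          simp only [bne_iff_ne, ne_eq, decide_eq_true_eq]
          intro hEq
          exact hαl2 a ha (hEq ▸ hvl2)) (by simp)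
      have htd2 := takeWhile_dropWhile_split (p := fun y => y != v) β (l' := l2') (v := v)
        (fun a ha => by
          simp only [bne_iff_ne, ne_eq, decide_eq_true_eq]
          intro hEq
          exact hvβ (hEq ▸ ha)) (by simp)
      have hun : upperAux (fuel+1) (x::l1) (x::l2)
          = (if isHorizV x (l1.headD x) then x :: l1.takeWhile (fun y => y != v)
              else x :: l2.takeWhile (fun y => y != v))
            ++ upperAux fuel (l1.dropWhile (fun y => y != v)) (l2.dropWhile (fun y => y != v)) := by
        simp only [upperAux, hfil]
      have htk1 : l1.takeWhile (fun y => y != v) = α := by rw [hsplit1]; exact htd1.1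
      have hdr1 : l1.dropWhile (fun y => y != v) = v :: l1' := by rw [hsplit1]; exact htd1.2
      have htk2 : l2.takeWhile (fun y => y != v) = β := by rw [hsplit2]; exact htd2.1
      have hdr2 : l2.dropWhile (fun y => y != v) = v :: l2' := by rw [hsplit2]; exact htd2.2
      rw [htk1, hdr1, htk2, hdr2] at hun
      -- new prefix decompositions
      have hLP' : LP = (t1 ++ x :: α) ++ v :: l1' := by rw [hLP, hsplit1]; simp
      have hLQ' : LQ = (t2 ++ x :: β) ++ v :: l2' := by rw [hLQ, hsplit2]; simp
      have hlen' : (v :: l1').length + (v :: l2').length ≤ fuel := by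
        rw [hsplit1, hsplit2] at hlen
        simp only [List.length_cons, List.length_append] at hlen ⊢
        omega
      obtain ⟨hrhead, hrmem, hrcons⟩ := ih v l1' l2' (t1 ++ x :: α) (t2 ++ x :: β) hLP' hLQ' hlen'
      -- successors of x in LP and LQ
      have hl1ne : l1 ≠ [] := by rw [hsplit1]; simp
      have hl2ne : l2 ≠ [] := fun h => by rw [h] at hvl2; simp at hvl2
      obtain ⟨y1, l1tl, hl1c⟩ : ∃ y1 l1tl, l1 = y1 :: l1tl := by
        cases l1 with
        | nil => exact absurd rfl hl1ne
        | cons a b => exact ⟨a, b, rfl⟩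
      obtain ⟨y2, l2tl, hl2c⟩ : ∃ y2 l2tl, l2 = y2 :: l2tl := by
        cases l2 with
        | nil => exact absurd rfl hl2ne
        | cons a b => exact ⟨a, b, rfl⟩
      have hsucc1 : Cons LP x y1 := ⟨t1, l1tl, by rw [hLP, hl1c]⟩
      have hsucc2 : Cons LQ x y2 := ⟨t2, l2tl, by rw [hLQ, hl2c]⟩
      have he1 : Edge B x y1 := chain'_rel_of_cons hPc hsucc1
      have he2 : Edge B x y2 := chain'_rel_of_cons hQc hsucc2
      have hheadD : l1.headD x = y1 := by rw [hl1c]; rfl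
      -- separation of piece interiors
      have hsepα : ∀ u ∈ α, u ∉ LQ := by
        intro u hu huLQ
        rw [hLQ] at huLQ
        rcases List.mem_append.mp huLQ with hut2 | hux2
        · exact gs_antisymm
            (gs_of_split' hQc hLQ u hut2)
            (gs_of_split hPc hLP u (by rw [hsplit1]; exact List.mem_append_left _ hu))
        · rcases List.mem_cons.mp hux2 with rfl | hul2
          · exact hxl1 (by rw [hsplit1]; exact List.mem_append_left _ hu)
          · exact hαl2 u hu hul2
      have hsepβ : ∀ u ∈ β, u ∉ LP := by
        intro u hu huLP
        rw [hLP] at huLP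
        have hul2 : u ∈ l2 := by rw [hsplit2]; exact List.mem_append_left _ hu
        rcases List.mem_append.mp huLP with hut1 | hux1
        · exact gs_antisymm
            (gs_of_split' hPc hLP u hut1)
            (gs_of_split hQc hLQ u hul2)
        · rcases List.mem_cons.mp hux1 with rfl | hul1
          · exact hxl2 hul2
          · -- u is a common vertex in l1 : must be v or after v in l1
            have humem : u ∈ l1.filter (fun y => l2.contains y) :=
              List.mem_filter.mpr ⟨hul1, by simpa using hul2⟩
            rw [hfil] at humem
            rcases List.mem_cons.mp humem with rfl | hurest
            · exact hvβ hu
            · rw [← hrestf] at hurest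
              have hul1' : u ∈ l1' := List.mem_of_mem_filter hurest
              exact gs_antisymm
                (gs_of_split hPc hLP' u hul1')
                (gs_of_split' hQc hLQ' u (by simp [hu]))
      -- case on the chosen branch
      cases hcond : isHorizV x (l1.headD x) with
      | true =>
        rw [hcond, if_pos rfl] at hun
        rw [hun]
        have hpieceLP : ∀ u w, Cons (x :: α) u w → Cons LP u w := by
          intro u w hc
          have h2 := (hc.append_right (v :: l1')).append_left t1
          rwa [show t1 ++ ((x :: α) ++ v :: l1') = LP by rw [hLP']; simp] at h2
        have hjuncLP : ∀ u, (x :: α).getLast? = some u → Cons LP u v := by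
          intro u hu
          have h2 := (cons_of_getLast hu v l1').append_left t1
          rwa [show t1 ++ ((x :: α) ++ v :: l1') = LP by rw [hLP']; simp] at h2
        -- the Q-side property at the branch point x
        have hatx : ∀ w, Cons LP x w → (Cons LQ x w ∨ ∃ y, Cons LQ x y ∧ Vert x y) := by
          intro w hcw
          have hwy1 : w = y1 := cons_nodup_right_unique hPn hcw hsucc1
          rw [hwy1]
          have hh1 : Horiz x y1 := edge_horiz_of_isHoriz he1 (by rwa [hheadD] at hcond)
          rcases edge_dir he2 with hh2 | hv2
          · have : y2 = y1 := horiz_succ_unique he2 he1 hh2 hh1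
            exact Or.inl (this ▸ hsucc2)
          · exact Or.inr ⟨y2, hsucc2, hv2⟩
        refine ⟨rfl, ?_, ?_⟩
        · intro v' hv'
          rcases List.mem_append.mp hv' with h | h
          · left
            rcases List.mem_cons.mp h with rfl | h'
            · rw [hLP]; simp
            · rw [hLP, hsplit1]
              simp only [List.mem_append, List.mem_cons]
              tauto
          · exact hrmem v' h
        · intro u w hc
          rcases cons_append_cases hc with hA | hC | ⟨hjl, hjr⟩
          · have hconsLP : Cons LP u w := hpieceLP u w hA
            refine ⟨Or.inl hconsLP, fun _ => Or.inl hconsLP, ?_⟩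
            intro huLQ
            rcases List.mem_cons.mp hA.mem_left with rfl | huα
            · exact hatx w hconsLP
            · exact absurd huLQ (hsepα u huα)
          · exact hrcons u w hC
          · have hwv : w = v := by
              rw [hrhead] at hjr
              exact (Option.some_inj.mp hjr).symm
            subst hwv
            have hconsLP : Cons LP u w := hjuncLP u hjl
            refine ⟨Or.inl hconsLP, fun _ => Or.inl hconsLP, ?_⟩
            intro huLQ
            rcases List.mem_cons.mp (mem_of_getLast?' hjl) with rfl | huα
            · exact hatx w hconsLP
            · exact absurd huLQ (hsepα u huα)
      | false =>
        rw [hcond, if_neg Bool.false_ne_true] at hun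
        rw [hun]
        have hpieceLQ : ∀ u w, Cons (x :: β) u w → Cons LQ u w := by
          intro u w hc
          have h2 := (hc.append_right (v :: l2')).append_left t2
          rwa [show t2 ++ ((x :: β) ++ v :: l2') = LQ by rw [hLQ']; simp] at h2
        have hjuncLQ : ∀ u, (x :: β).getLast? = some u → Cons LQ u v := by
          intro u hu
          have h2 := (cons_of_getLast hu v l2').append_left t2
          rwa [show t2 ++ ((x :: β) ++ v :: l2') = LQ by rw [hLQ']; simp] at h2
        have hvert1 : Vert x y1 := edge_vert_of_not_horiz he1 (by rwa [hheadD] at hcond)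
        refine ⟨rfl, ?_, ?_⟩
        · intro v' hv'
          rcases List.mem_append.mp hv' with h | h
          · right
            rcases List.mem_cons.mp h with rfl | h'
            · rw [hLQ]; simp
            · rw [hLQ, hsplit2]
              simp only [List.mem_append, List.mem_cons]
              tauto
          · exact hrmem v' h
        · intro u w hc
          rcases cons_append_cases hc with hA | hC | ⟨hjl, hjr⟩
          · have hconsLQ : Cons LQ u w := hpieceLQ u w hA
            refine ⟨Or.inr hconsLQ, ?_, fun _ => Or.inl hconsLQ⟩
            intro huLP
            rcases List.mem_cons.mp hA.mem_left with rfl | huβ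
            · exact Or.inr ⟨y1, hsucc1, hvert1⟩
            · exact absurd huLP (hsepβ u huβ)
          · exact hrcons u w hC
          · have hwv : w = v := by
              rw [hrhead] at hjr
              exact (Option.some_inj.mp hjr).symm
            subst hwv
            have hconsLQ : Cons LQ u w := hjuncLQ u hjl
            refine ⟨Or.inr hconsLQ, ?_, fun _ => Or.inl hconsLQ⟩
            intro huLP
            rcases List.mem_cons.mp (mem_of_getLast?' hjl) with rfl | huβ
            · exact Or.inr ⟨y1, hsucc1, hvert1⟩
            · exact absurd huLP (hsepβ u huβ)
/-! ### Assembly -/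

theorem two_le_of_ne {α : Type*} {l : List α} (hne : l ≠ [])
    (h : l.head hne ≠ l.getLast hne) : 2 ≤ l.length := by
  cases l with
  | nil => simp at hne
  | cons a t =>
    cases t with
    | nil => simp [List.head, List.getLast] at h
    | cons b t' => simp only [List.length_cons]; omega

theorem path_head (T : CPath m n B) {ii : Fin m} (h : T.first = V.row ii) :
    T.verts = V.row ii :: T.verts.tail := by
  conv_lhs => rw [← List.cons_head_tail T.nonempty]
  rw [show T.verts.head T.nonempty = V.row ii from h]

theorem path_head? (T : CPath m n B) {ii : Fin m} (h : T.first = V.row ii) :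
    T.verts.head? = some (V.row ii) := by
  rw [path_head T h]; rfl

theorem path_last? (T : CPath m n B) {jj : Fin n} (h : T.last = V.col jj) :
    T.verts.getLast? = some (V.col jj) := by
  rw [List.getLast?_eq_getLast T.nonempty]
  exact congrArg some h

theorem path_two_le (T : CPath m n B) {ii : Fin m} {jj : Fin n} (h1 : T.first = V.row ii)
    (h2 : T.last = V.col jj) : 2 ≤ T.verts.length := by
  apply two_le_of_ne T.nonempty
  rw [show T.verts.head T.nonempty = V.row ii from h1,
    show T.verts.getLast T.nonempty = V.col jj from h2]
  exact fun h => nomatch h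

/-- The core argument, for `S` either of the two paths. -/
theorem core {i i' : Fin m} {j j' : Fin n} (hB : IsCauchon B) (hii' : i < i')
    (S R : CPath m n B)
    (hS1 : S.first = V.row i) (hS2 : S.last = V.col j)
    (hR1 : R.first = V.row i') (hR2 : R.last = V.col j')
    (hd : ∀ v ∈ R.verts, v ∉ S.verts)
    (U : List (V m n))
    (hUhead : U.head? = some (V.row i))
    (hUproper : ∀ v ∈ U, proper B v)
    (hUedge : ∀ u w, Cons U u w → Edge B u w)
    (hUH : ∀ u w, Cons U u w → u ∈ S.verts →
      (Cons S.verts u w ∨ ∃ y, Cons S.verts u y ∧ Vert u y)) :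
    ∀ v ∈ R.verts, v ∉ U := by
  intro v hvR hvU
  have hS2len : 2 ≤ S.verts.length := path_two_le S hS1 hS2
  have hR2len : 2 ≤ R.verts.length := path_two_le R hR1 hR2
  have hShead : S.verts.head? = some (V.row i) := path_head? S hS1
  have hInD : InD S.verts (pos v) := by
    refine lemA hB S.chain hS2len hShead (path_last? S hS2) rfl R.chain (path_head? R hR1)
      ?_ rfl rfl hd v hvR
    exact le_of_lt hii'
  have hInv := lemU hB S.chain hS2len S.nodup hShead rfl hUedge hUhead
    (List.mem_of_mem_head? hShead) hUproper hUH v hvU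
  rcases hInv with hCC | hNot
  · obtain ⟨x, y, hxy, hcov⟩ := hCC
    have : v = x ∨ v = y := by
      apply vertex_on_cov (edge_eg (chain'_rel_of_cons S.chain hxy)) hcov
      exact mem_proper R.chain hR2len hvR
    have hvS : v ∈ S.verts := by
      rcases this with rfl | rfl
      exacts [hxy.mem_left, hxy.mem_right]
    exact hd v hvR hvS
  · exact hNot hInD

end S10

open S10 in
/-- Lemma: if `R` starts at a row vertex `i' > i` and is vertex-disjoint
from `P` or from `Q` (two paths from row vertex `i` to column vertex `j`), then `R` is
vertex-disjoint from `U(P,Q)`. -/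
theorem statement_10 (m n : ℕ) (hm : 2 ≤ m) (hn : 2 ≤ n)
    (B : Set (Fin m × Fin n)) (hB : IsCauchon B)
    (i i' : Fin m) (j j' : Fin n) (hii' : i < i')
    (P Q : CPath m n B)
    (hP1 : P.first = V.row i) (hP2 : P.last = V.col j)
    (hQ1 : Q.first = V.row i) (hQ2 : Q.last = V.col j)
    (R : CPath m n B)
    (hR1 : R.first = V.row i') (hR2 : R.last = V.col j')
    (hdisj : (∀ v ∈ R.verts, v ∉ P.verts) ∨ (∀ v ∈ R.verts, v ∉ Q.verts)) :
    ∀ v ∈ R.verts, v ∉ upperList P Q := by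
  have hPd : P.verts = V.row i :: P.verts.tail := path_head P hP1
  have hQd : Q.verts = V.row i :: Q.verts.tail := path_head Q hQ1
  have hUdef : upperList P Q = upperAux (P.verts.length + Q.verts.length)
      (V.row i :: P.verts.tail) (V.row i :: Q.verts.tail) := by
    rw [upperList]
    rw [← hPd, ← hQd]
  obtain ⟨hUhead, hUmem, hUcons⟩ := upperAux_spec P.chain Q.chain P.nodup Q.nodup
    (P.verts.length + Q.verts.length) (V.row i) P.verts.tail Q.verts.tail [] []
    (by simpa using hPd) (by simpa using hQd)
    (by rw [← hPd, ← hQd])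
  rw [← hUdef] at hUhead hUmem hUcons
  have hP2len : 2 ≤ P.verts.length := path_two_le P hP1 hP2
  have hQ2len : 2 ≤ Q.verts.length := path_two_le Q hQ1 hQ2
  have hUproper : ∀ v ∈ upperList P Q, proper B v := by
    intro v hv
    rcases hUmem v hv with h | h
    · exact mem_proper P.chain hP2len h
    · exact mem_proper Q.chain hQ2len h
  have hUedge : ∀ u w, Cons (upperList P Q) u w → Edge B u w := by
    intro u w hc
    rcases (hUcons u w hc).1 with h | h
    · exact chain'_rel_of_cons P.chain h
    · exact chain'_rel_of_cons Q.chain h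
  rcases hdisj with hd | hd
  · exact core hB hii' P R hP1 hP2 hR1 hR2 hd (upperList P Q) hUhead hUproper hUedge
      (fun u w hc hu => (hUcons u w hc).2.1 hu)
  · exact core hB hii' Q R hQ1 hQ2 hR1 hR2 hd (upperList P Q) hUhead hUproper hUedge
      (fun u w hc hu => (hUcons u w hc).2.2 hu)

end QM

end
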